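/- arXiv:1908.04438 — 9 statements merged into one kernel-verified Lean document; each statement's English description precedes it below -/
import Mathlib

section
/- For any two bounded sets A, B in ℝ^d, diam(A ⊕ B)² ≥ diam(A)² + diam(B)², where diam denotes the Euclidean diameter and ⊕ the Minkowski sum. -/
open Pointwise

/-- For nonempty bounded sets `A, B ⊆ ℝ^d`,
`diam(A ⊕ B)² ≥ diam(A)² + diam(B)²` (Euclidean diameter, Minkowski sum). -/
theorem sq_diam_minkowski_sum_ge (d : ℕ) (A B : Set (EuclideanSpace ℝ (Fin d)))
    (hA : A.Nonempty) (hB : B.Nonempty)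
    (hAb : Bornology.IsBounded A) (hBb : Bornology.IsBounded B) :
    Metric.diam A ^ 2 + Metric.diam B ^ 2 ≤ Metric.diam (A + B) ^ 2 := by
  set D := Metric.diam (A + B) with hD
  have hDb : Bornology.IsBounded (A + B) := hAb.add hBb
  have key : ∀ a ∈ A, ∀ a' ∈ A, ∀ b ∈ B, ∀ b' ∈ B,
      dist a a' ^ 2 + dist b b' ^ 2 ≤ D ^ 2 := by
    intro a ha a' ha' b hb b' hb'
    have h1 : dist (a + b) (a' + b') ≤ D :=
      Metric.dist_le_diam_of_mem hDb (Set.add_mem_add ha hb) (Set.add_mem_add ha' hb')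
    have h2 : dist (a + b') (a' + b) ≤ D :=
      Metric.dist_le_diam_of_mem hDb (Set.add_mem_add ha hb') (Set.add_mem_add ha' hb)
    have e1 : dist (a + b) (a' + b') = ‖(a - a') + (b - b')‖ := by
      rw [dist_eq_norm]; congr 1; abel
    have e2 : dist (a + b') (a' + b) = ‖(a - a') - (b - b')‖ := by
      rw [dist_eq_norm]; congr 1; abel
    have hn1 : ‖(a - a') + (b - b')‖ ≤ D := e1 ▸ h1
    have hn2 : ‖(a - a') - (b - b')‖ ≤ D := e2 ▸ h2
    have hpar := parallelogram_law_with_norm ℝ (a - a') (b - b')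
    rw [dist_eq_norm, dist_eq_norm]
    nlinarith [norm_nonneg ((a - a') + (b - b')), norm_nonneg ((a - a') - (b - b'))]
  obtain ⟨a0, ha0⟩ := hA
  obtain ⟨b0, hb0⟩ := hB
  have step1 : ∀ b ∈ B, ∀ b' ∈ B, Metric.diam A ^ 2 + dist b b' ^ 2 ≤ D ^ 2 := by
    intro b hb b' hb'
    have hc : 0 ≤ D ^ 2 - dist b b' ^ 2 := by
      have h := key a0 ha0 a0 ha0 b hb b' hb'
      simp only [dist_self] at h
      nlinarith
    have hdiam : Metric.diam A ≤ Real.sqrt (D ^ 2 - dist b b' ^ 2) := by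
      apply Metric.diam_le_of_forall_dist_le (Real.sqrt_nonneg _)
      intro a ha a' ha'
      have h := key a ha a' ha' b hb b' hb'
      have h' : dist a a' ^ 2 ≤ D ^ 2 - dist b b' ^ 2 := by linarith
      calc dist a a' = Real.sqrt (dist a a' ^ 2) := (Real.sqrt_sq dist_nonneg).symm
        _ ≤ _ := Real.sqrt_le_sqrt h'
    have := pow_le_pow_left₀ Metric.diam_nonneg hdiam 2
    rw [Real.sq_sqrt hc] at this
    linarith
  have hc2 : 0 ≤ D ^ 2 - Metric.diam A ^ 2 := by
    have h := step1 b0 hb0 b0 hb0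
    simp only [dist_self] at h
    nlinarith
  have hdiamB : Metric.diam B ≤ Real.sqrt (D ^ 2 - Metric.diam A ^ 2) := by
    apply Metric.diam_le_of_forall_dist_le (Real.sqrt_nonneg _)
    intro b hb b' hb'
    have h := step1 b hb b' hb'
    have h' : dist b b' ^ 2 ≤ D ^ 2 - Metric.diam A ^ 2 := by linarith
    calc dist b b' = Real.sqrt (dist b b' ^ 2) := (Real.sqrt_sq dist_nonneg).symm
      _ ≤ _ := Real.sqrt_le_sqrt h'
  have := pow_le_pow_left₀ Metric.diam_nonneg hdiamB 2
  rw [Real.sq_sqrt hc2] at this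
  linarith
end

section
/- General quantitative Helly theorem via Minkowski parametrization: Let 𝓒 be a family of convex sets in ℝ^d admitting a surjective map D : ℝ^l → 𝓒 with D(λa + (1-λ)b) = λD(a) ⊕ (1-λ)D(b) for all a, b ∈ ℝ^l and λ ∈ [0,1]. Let f : 𝓒 → ℝ satisfy f(λA ⊕ (1-λ)B) ≥ min(f(A), f(B)). If 𝓕 is a finite family of convex sets in ℝ^d such that every at most l+1 members of 𝓕 have intersection containing some K ∈ 𝓒 with f(K) ≥ 1, then ∩𝓕 contains some K ∈ 𝓒 with f(K) ≥ 1. -/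
open Pointwise

/-- General quantitative Helly theorem via a Minkowski
parametrization `D : ℝ^l → 𝓒` and a min-concave function `f`. -/
theorem helly_minkowski_parametrization (d l : ℕ)
    (𝓒 : Set (Set (Fin d → ℝ))) (h𝓒 : ∀ C ∈ 𝓒, Convex ℝ C)
    (D : (Fin l → ℝ) → Set (Fin d → ℝ)) (hD : Set.range D = 𝓒)
    (hDcombo : ∀ a b : Fin l → ℝ, ∀ lam ∈ Set.Icc (0 : ℝ) 1,
      D (lam • a + (1 - lam) • b) = lam • D a + (1 - lam) • D b)
    (f : Set (Fin d → ℝ) → ℝ)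
    (hf : ∀ A ∈ 𝓒, ∀ B ∈ 𝓒, ∀ lam ∈ Set.Icc (0 : ℝ) 1,
      min (f A) (f B) ≤ f (lam • A + (1 - lam) • B))
    (F : Finset (Set (Fin d → ℝ))) (hF : ∀ S ∈ F, Convex ℝ S)
    (h : ∀ G ⊆ F, G.card ≤ l + 1 →
      ∃ K ∈ 𝓒, 1 ≤ f K ∧ K ⊆ ⋂₀ (G : Set (Set (Fin d → ℝ)))) :
    ∃ K ∈ 𝓒, 1 ≤ f K ∧ K ⊆ ⋂₀ (F : Set (Set (Fin d → ℝ))) := by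
  classical
  rcases F.eq_empty_or_nonempty with rfl | ⟨S₀, hS₀⟩
  · simpa using h ∅ (by simp) (by simp)
  -- lifted sets
  set T : Set (Fin d → ℝ) → Set (Fin l → ℝ) :=
    fun S => {x | D x ⊆ S ∧ 1 ≤ f (D x)} with hT
  have hDmem : ∀ x, D x ∈ 𝓒 := fun x => hD ▸ Set.mem_range_self x
  have hTconv : ∀ S ∈ F, Convex ℝ (T S) := by
    intro S hS x hx y hy a b ha hb hab
    have hb' : b = 1 - a := by linarith
    subst hb'
    have hmem : a ∈ Set.Icc (0 : ℝ) 1 := ⟨ha, by linarith⟩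
    have hcombo := hDcombo x y a hmem
    constructor
    · rw [hcombo]
      refine subset_trans (Set.add_subset_add (Set.smul_set_mono hx.1)
        (Set.smul_set_mono hy.1)) ?_
      exact (hF S hS).set_combo_subset ha hb (by linarith)
    · rw [hcombo]
      have := hf (D x) (hDmem x) (D y) (hDmem y) a hmem
      exact le_trans (le_min hx.2 hy.2) this
  have hinter : ∀ G : Finset (Set (Fin d → ℝ)), G ⊆ F →
      G.card ≤ Module.finrank ℝ (Fin l → ℝ) + 1 → (⋂ X ∈ G, T X).Nonempty := by
    intro G hG hcard
    rw [Module.finrank_fintype_fun_eq_card, Fintype.card_fin] at hcard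
    obtain ⟨K, hK𝓒, hKf, hKsub⟩ := h G hG hcard
    obtain ⟨x, rfl⟩ : K ∈ Set.range D := hD ▸ hK𝓒
    refine ⟨x, ?_⟩
    simp only [Set.mem_iInter]
    intro X hX
    exact ⟨fun y hy => hKsub hy X hX, hKf⟩
  obtain ⟨x, hx⟩ := Convex.helly_theorem' (F := T) (s := F) hTconv hinter
  simp only [Set.mem_iInter] at hx
  refine ⟨D x, hDmem x, (hx S₀ hS₀).2, ?_⟩
  intro y hy
  simp only [Set.mem_sInter]
  intro X hX
  exact (hx X hX).1 hy
end

section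
/- Helly theorem for simultaneous approximation: Let ε > 0, let 𝓒 be a family of convex sets in ℝ^d with a Minkowski parametrization in ℝ^l, and let 𝓕 be a finite family of convex sets in ℝ^d. Suppose for every subfamily 𝓕' ⊆ 𝓕 of at most l + d + 1 sets there exist A ∈ 𝓒 and a ∈ ℝ^d with a + A ⊆ K ⊆ a + (1+ε)A for all K ∈ 𝓕'. Then there exist A ∈ 𝓒 and a ∈ ℝ^d with a + A ⊆ K ⊆ a + (1+ε)A for all K ∈ 𝓕. -/
open Pointwise

/-- Helly theorem for simultaneous `ε`-approximation by translates of
members of a family `𝓒` with a Minkowski parametrization in `ℝ^l`. -/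
theorem helly_simultaneous_approximation (d l : ℕ) (ε : ℝ) (hε : 0 < ε)
    (𝓒 : Set (Set (Fin d → ℝ))) (h𝓒 : ∀ C ∈ 𝓒, Convex ℝ C)
    (D : (Fin l → ℝ) → Set (Fin d → ℝ)) (hD : Set.range D = 𝓒)
    (hDcombo : ∀ a b : Fin l → ℝ, ∀ lam ∈ Set.Icc (0 : ℝ) 1,
      D (lam • a + (1 - lam) • b) = lam • D a + (1 - lam) • D b)
    (F : Finset (Set (Fin d → ℝ))) (hF : ∀ S ∈ F, Convex ℝ S)
    (h : ∀ G ⊆ F, G.card ≤ l + d + 1 →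
      ∃ A ∈ 𝓒, ∃ a : Fin d → ℝ, ∀ K ∈ G,
        a +ᵥ A ⊆ K ∧ K ⊆ a +ᵥ (1 + ε) • A) :
    ∃ A ∈ 𝓒, ∃ a : Fin d → ℝ, ∀ K ∈ F,
      a +ᵥ A ⊆ K ∧ K ⊆ a +ᵥ (1 + ε) • A := by
  classical
  set E := (Fin l → ℝ) × (Fin d → ℝ) with hE
  set T : Set (Fin d → ℝ) → Set E := fun K =>
    {p | p.2 +ᵥ D p.1 ⊆ K ∧ K ⊆ p.2 +ᵥ (1 + ε) • D p.1} with hT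
  have hrank : Module.finrank ℝ E = l + d := by
    show Module.finrank ℝ ((Fin l → ℝ) × (Fin d → ℝ)) = l + d
    simp
  have hconv : ∀ K ∈ F, Convex ℝ (T K) := by
    intro K hK p hp q hq μ ν hμ hν hμν
    have hν' : ν = 1 - μ := by linarith
    have hDeq : D (μ • p.1 + (1 - μ) • q.1) = μ • D p.1 + (1 - μ) • D q.1 :=
      hDcombo p.1 q.1 μ ⟨hμ, by linarith⟩
    have h1 : (μ • p + ν • q).1 = μ • p.1 + (1 - μ) • q.1 := by
      rw [hν']; rfl
    have h2 : (μ • p + ν • q).2 = μ • p.2 + (1 - μ) • q.2 := by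
      rw [hν']; rfl
    constructor
    · -- inner inclusion
      intro z hz
      rw [h2, h1, hDeq] at hz
      obtain ⟨w, hw, rfl⟩ := hz
      obtain ⟨u, hu, v, hv, rfl⟩ := hw
      obtain ⟨u, hu, rfl⟩ := hu
      obtain ⟨v, hv, rfl⟩ := hv
      have h1 : p.2 + u ∈ K := hp.1 ⟨u, hu, rfl⟩
      have h2 : q.2 + v ∈ K := hq.1 ⟨v, hv, rfl⟩
      have := hF K hK h1 h2 hμ (by linarith : (0:ℝ) ≤ 1 - μ) (by ring)
      convert this using 1
      simp only [vadd_eq_add]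
      module
    · -- outer inclusion
      intro z hz
      obtain ⟨u, hu, hu'⟩ := hp.2 hz
      obtain ⟨v, hv, hv'⟩ := hq.2 hz
      obtain ⟨u, hu, rfl⟩ := hu
      obtain ⟨v, hv, rfl⟩ := hv
      rw [h2, h1, hDeq]
      refine ⟨(1 + ε) • (μ • u + (1 - μ) • v), ⟨μ • u + (1 - μ) • v,
        ⟨μ • u, ⟨u, hu, rfl⟩, (1 - μ) • v, ⟨v, hv, rfl⟩, rfl⟩, rfl⟩, ?_⟩
      simp only [vadd_eq_add] at hu' hv' ⊢
      have key : μ • (p.2 + (1 + ε) • u) + (1 - μ) • (q.2 + (1 + ε) • v) = z := by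
        rw [hu', hv']; module
      rw [← key]; module
  have hinter : (⋂ K ∈ F, T K).Nonempty := by
    apply Convex.helly_theorem' hconv
    intro G hG hGcard
    obtain ⟨A, hA, a, ha⟩ := h G hG (by omega)
    rw [← hD] at hA
    obtain ⟨x, rfl⟩ := hA
    exact ⟨(x, a), Set.mem_biInter fun K hK => ha K hK⟩
  obtain ⟨⟨x, a⟩, hxa⟩ := hinter
  refine ⟨D x, by rw [← hD]; exact ⟨x, rfl⟩, a, fun K hK => ?_⟩
  simp only [Set.mem_iInter] at hxa
  exact hxa K hK
end

section
/- Helly theorem for ellipsoids by trace: Let 𝓕 be a finite family of convex sets in ℝ^d. If the intersection of every d(d+3)/2 or fewer members of 𝓕 contains an ellipsoid whose principal axis lengths sum to at least one, then ∩𝓕 contains an ellipsoid whose principal axis lengths sum to at least one. -/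
open Pointwise

/-- The linear action of a `d × d` matrix on `EuclideanSpace ℝ (Fin d)`. -/
noncomputable def matApply {d : ℕ} (A : Matrix (Fin d) (Fin d) ℝ)
    (x : EuclideanSpace ℝ (Fin d)) : EuclideanSpace ℝ (Fin d) :=
  (EuclideanSpace.equiv (Fin d) ℝ).symm (A.mulVec (EuclideanSpace.equiv (Fin d) ℝ x))

/-- An ellipsoid in `ℝ^d` whose principal axis lengths sum to at least one:
`a + A·B_d` with `A` symmetric positive definite and `2·tr(A) ≥ 1`. -/
def IsEllipsoidAxisSumGeOne {d : ℕ} (E : Set (EuclideanSpace ℝ (Fin d))) : Prop :=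
  ∃ (a : EuclideanSpace ℝ (Fin d)) (A : Matrix (Fin d) (Fin d) ℝ),
    A.PosDef ∧ 1 ≤ 2 * A.trace ∧
    E = (fun x => a + matApply A x) ''
      Metric.closedBall (0 : EuclideanSpace ℝ (Fin d)) 1

namespace HellyEllipsoid
open Matrix in
lemma _root_.HellyAux.herm_smul {n : ℕ} {A : Matrix (Fin n) (Fin n) ℝ} (hA : A.IsHermitian) (c : ℝ) : (c • A).IsHermitian := by
  unfold Matrix.IsHermitian at *
  rw [Matrix.conjTranspose_smul, star_trivial, hA]

variable {d : ℕ}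

abbrev PIdx (d : ℕ) (j₀ : Fin d) : Type :=
  Fin d ⊕ {e : Sym2 (Fin d) // e ≠ Sym2.mk j₀ j₀}

noncomputable def gfun (j₀ : Fin d) (z : PIdx d j₀ → ℝ) (e : Sym2 (Fin d)) : ℝ :=
  if h : e = Sym2.mk j₀ j₀ then 0 else z (Sum.inr ⟨e, h⟩)

noncomputable def Amat (j₀ : Fin d) (z : PIdx d j₀ → ℝ) : Matrix (Fin d) (Fin d) ℝ :=
  fun i j =>
    if i = j₀ ∧ j = j₀ then
      1 / 2 - ∑ i' ∈ Finset.univ.erase j₀, gfun j₀ z (Sym2.mk i' i')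
    else gfun j₀ z (Sym2.mk i j)

noncomputable def avec (j₀ : Fin d) (z : PIdx d j₀ → ℝ) : EuclideanSpace ℝ (Fin d) :=
  (EuclideanSpace.equiv (Fin d) ℝ).symm (fun i => z (Sum.inl i))

lemma gfun_comb (j₀ : Fin d) (z₁ z₂ : PIdx d j₀ → ℝ) (t₁ t₂ : ℝ) (e : Sym2 (Fin d)) :
    gfun j₀ (t₁ • z₁ + t₂ • z₂) e = t₁ * gfun j₀ z₁ e + t₂ * gfun j₀ z₂ e := by
  unfold gfun; split <;> simp

lemma Amat_trace (j₀ : Fin d) (z : PIdx d j₀ → ℝ) : (Amat j₀ z).trace = 1 / 2 := by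
  rw [Matrix.trace, ← Finset.add_sum_erase Finset.univ _ (Finset.mem_univ j₀)]
  have h1 : (Amat j₀ z).diag j₀ =
      1 / 2 - ∑ i' ∈ Finset.univ.erase j₀, gfun j₀ z (Sym2.mk i' i') := by
    simp [Amat, Matrix.diag]
  have h2 : ∀ i ∈ Finset.univ.erase j₀,
      (Amat j₀ z).diag i = gfun j₀ z (Sym2.mk i i) := by
    intro i hi
    have hne : i ≠ j₀ := Finset.ne_of_mem_erase hi
    simp [Amat, Matrix.diag, hne]
  rw [h1, Finset.sum_congr rfl h2]; ring

lemma Amat_comb (j₀ : Fin d) (z₁ z₂ : PIdx d j₀ → ℝ) {t₁ t₂ : ℝ} (ht : t₁ + t₂ = 1) :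
    Amat j₀ (t₁ • z₁ + t₂ • z₂) = t₁ • Amat j₀ z₁ + t₂ • Amat j₀ z₂ := by
  ext i j
  simp only [Amat, Matrix.add_apply, Matrix.smul_apply, smul_eq_mul]
  split
  · simp only [gfun_comb, Finset.sum_add_distrib, ← Finset.mul_sum]
    linear_combination (-1 / 2 : ℝ) * ht
  · exact gfun_comb j₀ z₁ z₂ t₁ t₂ _

lemma avec_comb (j₀ : Fin d) (z₁ z₂ : PIdx d j₀ → ℝ) (t₁ t₂ : ℝ) :
    avec j₀ (t₁ • z₁ + t₂ • z₂) = t₁ • avec j₀ z₁ + t₂ • avec j₀ z₂ := by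
  unfold avec
  rw [show (fun i => (t₁ • z₁ + t₂ • z₂) (Sum.inl i))
      = t₁ • (fun i => z₁ (Sum.inl i)) + t₂ • (fun i => z₂ (Sum.inl i)) from by
    funext i; simp]
  rw [map_add, map_smul, map_smul]

lemma matApply_comb {M N : Matrix (Fin d) (Fin d) ℝ} (t₁ t₂ : ℝ) (x : EuclideanSpace ℝ (Fin d)) :
    matApply (t₁ • M + t₂ • N) x = t₁ • matApply M x + t₂ • matApply N x := by
  simp [matApply, Matrix.add_mulVec, Matrix.smul_mulVec, map_add, map_smul]

lemma matApply_smul_right (M : Matrix (Fin d) (Fin d) ℝ) (t : ℝ) (x : EuclideanSpace ℝ (Fin d)) :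
    matApply M (t • x) = t • matApply M x := by
  simp [matApply, map_smul, Matrix.mulVec_smul]

lemma matApply_smul_left (M : Matrix (Fin d) (Fin d) ℝ) (t : ℝ) (x : EuclideanSpace ℝ (Fin d)) :
    matApply (t • M) x = t • matApply M x := by
  simp [matApply, Matrix.smul_mulVec, map_smul]

lemma posDef_smul {n : ℕ} {A : Matrix (Fin n) (Fin n) ℝ} (hA : A.PosDef) {c : ℝ} (hc : 0 < c) :
    (c • A).PosDef := by
  constructor
  · exact HellyAux.herm_smul hA.1 c
  · intro x hx
    simpa [Finsupp.mul_sum, mul_assoc, mul_left_comm] using mul_pos hc (hA.2 hx)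

lemma posDef_comb {n : ℕ} {M N : Matrix (Fin n) (Fin n) ℝ} (hM : M.PosDef) (hN : N.PosDef)
    {t₁ t₂ : ℝ} (h1 : 0 ≤ t₁) (h2 : 0 ≤ t₂) (ht : t₁ + t₂ = 1) : (t₁ • M + t₂ • N).PosDef := by
  rcases h1.eq_or_lt with h | h
  · have h2' : t₂ = 1 := by linarith
    simp [← h, h2', hN]
  rcases h2.eq_or_lt with h' | h'
  · have h1' : t₁ = 1 := by linarith
    simp [← h', h1', hM]
  · exact (posDef_smul hM h).add (posDef_smul hN h')

noncomputable def zOf (j₀ : Fin d) (aF : Fin d → ℝ) (A : Matrix (Fin d) (Fin d) ℝ)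
    (hsym : ∀ i j, A i j = A j i) : PIdx d j₀ → ℝ :=
  Sum.elim aF (fun p => Sym2.lift ⟨fun i j => A i j, fun i j => hsym i j⟩ p.1)

lemma Amat_zOf (j₀ : Fin d) (aF : Fin d → ℝ) (A : Matrix (Fin d) (Fin d) ℝ)
    (hsym : ∀ i j, A i j = A j i) (htr : A.trace = 1 / 2) :
    Amat j₀ (zOf j₀ aF A hsym) = A := by
  have hg : ∀ i j : Fin d, ¬(i = j₀ ∧ j = j₀) →
      gfun j₀ (zOf j₀ aF A hsym) (Sym2.mk i j) = A i j := by
    intro i j hij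
    have hne : Sym2.mk i j ≠ Sym2.mk j₀ j₀ := by
      simp only [ne_eq, Sym2.eq_iff]
      tauto
    rw [gfun, dif_neg hne]
    simp [zOf]
  ext i j
  by_cases hij : i = j₀ ∧ j = j₀
  · obtain ⟨h1, h2⟩ := hij
    simp only [Amat, if_pos (⟨h1, h2⟩ : i = j₀ ∧ j = j₀)]
    have hsumeq : ∀ i' ∈ Finset.univ.erase j₀,
        gfun j₀ (zOf j₀ aF A hsym) (Sym2.mk i' i') = A i' i' := by
      intro i' hi'
      exact hg i' i' (by have := Finset.ne_of_mem_erase hi'; tauto)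
    rw [Finset.sum_congr rfl hsumeq, h1, h2]
    have hsplit := Finset.add_sum_erase Finset.univ (fun k => A k k) (Finset.mem_univ j₀)
    rw [Matrix.trace] at htr
    simp only [Matrix.diag] at htr
    rw [htr] at hsplit
    linarith
  · simp only [Amat, if_neg hij]
    exact hg i j hij

lemma avec_zOf (j₀ : Fin d) (aF : Fin d → ℝ) (A : Matrix (Fin d) (Fin d) ℝ)
    (hsym : ∀ i j, A i j = A j i) :
    avec j₀ (zOf j₀ aF A hsym) = (EuclideanSpace.equiv (Fin d) ℝ).symm aF := rfl

lemma card_PIdx (hd : 0 < d) (j₀ : Fin d) :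
    Fintype.card (PIdx d j₀) + 1 ≤ d * (d + 3) / 2 := by
  have h1 : Fintype.card {e : Sym2 (Fin d) // e ≠ Sym2.mk j₀ j₀}
      = Fintype.card (Sym2 (Fin d)) - 1 := by
    rw [Fintype.card_subtype_compl, Fintype.card_subtype_eq]
  have h2 : Fintype.card (Sym2 (Fin d)) = (d + 1).choose 2 := by
    rw [Sym2.card, Fintype.card_fin]
  have h3 : (d + 1).choose 2 = d * (d + 1) / 2 := by
    rw [Nat.choose_two_right]; simp [Nat.mul_comm]
  have hcard : Fintype.card (PIdx d j₀) = d + (d * (d + 1) / 2 - 1) := by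
    simp only [PIdx, Fintype.card_sum, Fintype.card_fin, h1, h2, h3]
  have h5 : d * (d + 3) = d * (d + 1) + 2 * d := by ring
  have hm2 : 2 ≤ d * (d + 1) := by nlinarith
  rw [hcard, h5]
  omega

end HellyEllipsoid

open HellyEllipsoid in
/-- Helly theorem for ellipsoids by trace: if the intersection of every
`d(d+3)/2` or fewer members of a finite family of convex sets contains an ellipsoid whose
principal axis lengths sum to at least one, then so does the intersection of the whole
family. -/
theorem helly_ellipsoids_trace (d : ℕ)
    (F : Finset (Set (EuclideanSpace ℝ (Fin d)))) (hF : ∀ S ∈ F, Convex ℝ S)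
    (h : ∀ G ⊆ F, G.card ≤ d * (d + 3) / 2 →
      ∃ E, IsEllipsoidAxisSumGeOne E ∧ E ⊆ ⋂₀ (G : Set (Set (EuclideanSpace ℝ (Fin d))))) :
    ∃ E, IsEllipsoidAxisSumGeOne E ∧ E ⊆ ⋂₀ (F : Set (Set (EuclideanSpace ℝ (Fin d)))) := by
  classical
  rcases Nat.eq_zero_or_pos d with hd0 | hd
  · subst hd0
    obtain ⟨E, ⟨a, A, hA, htr, hE⟩, -⟩ := h ∅ (Finset.empty_subset F) (by simp)
    have hz : A.trace = 0 := by simp [Matrix.trace]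
    rw [hz] at htr; norm_num at htr
  by_cases hsmall : F.card ≤ d * (d + 3) / 2
  · exact h F Finset.Subset.rfl hsmall
  set j₀ : Fin d := ⟨0, hd⟩ with hj₀
  set C : Set (EuclideanSpace ℝ (Fin d)) → Set (PIdx d j₀ → ℝ) := fun S =>
    {z | (Amat j₀ z).PosDef ∧
      ∀ x ∈ Metric.closedBall (0 : EuclideanSpace ℝ (Fin d)) 1,
        avec j₀ z + matApply (Amat j₀ z) x ∈ S} with hCdef
  have hfin : Module.finrank ℝ (PIdx d j₀ → ℝ) + 1 ≤ d * (d + 3) / 2 := by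
    rw [Module.finrank_pi]; exact card_PIdx hd j₀
  have hconv : ∀ S ∈ F, Convex ℝ (C S) := by
    intro S hSF z₁ hz₁ z₂ hz₂ t₁ t₂ h1 h2 ht
    obtain ⟨hp₁, hm₁⟩ := hz₁
    obtain ⟨hp₂, hm₂⟩ := hz₂
    constructor
    · rw [Amat_comb j₀ z₁ z₂ ht]
      exact posDef_comb hp₁ hp₂ h1 h2 ht
    · intro x hx
      rw [Amat_comb j₀ z₁ z₂ ht, avec_comb, matApply_comb]
      have hrw : (t₁ • avec j₀ z₁ + t₂ • avec j₀ z₂) +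
          (t₁ • matApply (Amat j₀ z₁) x + t₂ • matApply (Amat j₀ z₂) x)
          = t₁ • (avec j₀ z₁ + matApply (Amat j₀ z₁) x)
            + t₂ • (avec j₀ z₂ + matApply (Amat j₀ z₂) x) := by
        simp only [smul_add]; abel
      rw [hrw]
      exact hF S hSF (hm₁ x hx) (hm₂ x hx) h1 h2 ht
  have hinter : ∀ I ⊆ F, I.card ≤ Module.finrank ℝ (PIdx d j₀ → ℝ) + 1 →
      (⋂ S ∈ I, C S).Nonempty := by
    intro I hIF hIcard
    obtain ⟨E, ⟨a, A, hA, htrA, hE⟩, hEsub⟩ := h I hIF (hIcard.trans hfin)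
    have htrpos : 0 < A.trace := by linarith
    set t : ℝ := (2 * A.trace)⁻¹ with htdef
    have ht0 : 0 < t := by rw [htdef]; positivity
    have ht1 : t ≤ 1 := by
      rw [htdef]
      exact inv_le_one_of_one_le₀ htrA
    set A' := t • A with hA'def
    have hsym : ∀ i j, A' i j = A' j i := by
      intro i j
      have h1 := congrFun (congrFun hA.1 i) j
      rw [Matrix.conjTranspose_apply, star_trivial] at h1
      simp only [hA'def, Matrix.smul_apply, smul_eq_mul, h1]
    have hA' : A'.PosDef := posDef_smul hA ht0
    have htr' : A'.trace = 1 / 2 := by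
      rw [hA'def, Matrix.trace_smul, htdef, smul_eq_mul]
      field_simp
    set aF := EuclideanSpace.equiv (Fin d) ℝ a with haF
    refine ⟨zOf j₀ aF A' hsym, Set.mem_iInter₂.mpr ?_⟩
    intro S hS
    constructor
    · rw [Amat_zOf j₀ aF A' hsym htr']; exact hA'
    · intro x hx
      rw [Amat_zOf j₀ aF A' hsym htr', avec_zOf]
      have ha : (EuclideanSpace.equiv (Fin d) ℝ).symm aF = a := by
        rw [haF]; exact (EuclideanSpace.equiv (Fin d) ℝ).symm_apply_apply a
      rw [ha]
      have hmem : t • x ∈ Metric.closedBall (0 : EuclideanSpace ℝ (Fin d)) 1 := by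
        rw [mem_closedBall_zero_iff] at hx ⊢
        rw [norm_smul, Real.norm_eq_abs, abs_of_pos ht0]
        calc t * ‖x‖ ≤ 1 * 1 := by
              apply mul_le_mul ht1 hx (norm_nonneg x) zero_le_one
          _ = 1 := by ring
      have heq : a + matApply A' x = a + matApply A (t • x) := by
        rw [hA'def, matApply_smul_left, matApply_smul_right]
      rw [heq]
      have hmemE : a + matApply A (t • x) ∈ E := by
        rw [hE]; exact ⟨t • x, hmem, rfl⟩
      exact Set.mem_sInter.mp (hEsub hmemE) S (Finset.mem_coe.mpr hS)
  have hH := Convex.helly_theorem' (𝕜 := ℝ) hconv hinter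
  obtain ⟨z, hz⟩ := hH
  rw [Set.mem_iInter₂] at hz
  have hFpos : 0 < F.card := by
    rcases Nat.eq_zero_or_pos F.card with h0 | h0
    · exact absurd (h0 ▸ Nat.zero_le _) hsmall
    · exact h0
  obtain ⟨S₀, hS₀⟩ := Finset.card_pos.mp hFpos
  refine ⟨_, ⟨avec j₀ z, Amat j₀ z, (hz S₀ hS₀).1, by rw [Amat_trace]; norm_num, rfl⟩, ?_⟩
  intro y hy
  rw [Set.mem_sInter]
  intro S hS
  obtain ⟨x, hx, rfl⟩ := hy
  exact (hz S (Finset.mem_coe.mp hS)).2 x hx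
end

section
/- Contractibility of affine-image witness sets: Let K ⊆ ℝ^d be an open set of volume one, M ⊆ ℝ^d be a convex set, and let 𝒦 = {(a, A) : a ∈ ℝ^d, A symmetric positive definite with det A = 1}. Then the set S = {(a, A) ∈ 𝒦 : a + A·K ⊆ M} is either empty or contractible. -/
open Pointwise MeasureTheory Matrix


lemma posdef_conj {n : ℕ} {B C : Matrix (Fin n) (Fin n) ℝ} (hB : B.PosDef)
    (hC : IsUnit C.det) : (Cᴴ * B * C).PosDef := by
  refine PosDef.of_dotProduct_mulVec_pos (isHermitian_conjTranspose_mul_mul C hB.1) fun x hx => ?_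
  have hinj : Function.Injective (C.mulVec) := mulVec_injective_iff_isUnit.2 ((isUnit_iff_isUnit_det C).2 hC)
  have hCx : C *ᵥ x ≠ 0 := fun h => hx (hinj (by simpa using h))
  simpa only [star_mulVec, dotProduct_mulVec, vecMul_vecMul] using hB.dotProduct_mulVec_pos hCx

lemma det_nonneg_of_posSemidef {n : ℕ} {S : Matrix (Fin n) (Fin n) ℝ} (hS : S.PosSemidef) :
    0 ≤ S.det := by
  rw [hS.1.det_eq_prod_eigenvalues]
  exact Finset.prod_nonneg fun i _ => by simpa using hS.eigenvalues_nonneg i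

lemma det_one_convex_comb_id {n : ℕ} {X : Matrix (Fin n) (Fin n) ℝ} (hX : X.PosDef)
    (hdX : X.det = 1) {s : ℝ} (hs0 : 0 ≤ s) (hs1 : s ≤ 1) :
    1 ≤ (s • (1 : Matrix (Fin n) (Fin n) ℝ) + (1 - s) • X).det := by
  set μ := hX.1.eigenvalues with hμ
  set U := (hX.1.eigenvectorUnitary : Matrix (Fin n) (Fin n) ℝ) with hU
  have hspec : X = U * diagonal (RCLike.ofReal ∘ μ) * star U := hX.1.spectral_theorem
  have hUU : U * star U = 1 := (Matrix.mem_unitaryGroup_iff).mp hX.1.eigenvectorUnitary.2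
  have key : s • (1 : Matrix (Fin n) (Fin n) ℝ) + (1 - s) • X
      = U * (diagonal (fun i => s + (1 - s) * μ i)) * star U := by
    have hdiag : (diagonal (fun i => s + (1 - s) * μ i) : Matrix (Fin n) (Fin n) ℝ)
        = s • 1 + (1 - s) • diagonal (RCLike.ofReal ∘ μ) := by
      ext i j
      rcases eq_or_ne i j with h | h
      · subst h; simp [diagonal_apply_eq, Matrix.one_apply_eq]
      · simp [diagonal_apply_ne _ h, Matrix.one_apply_ne h]
    rw [hdiag, mul_add, add_mul, mul_smul_comm, mul_smul_comm, smul_mul_assoc, smul_mul_assoc,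
      mul_one, hUU, ← hspec]
  rw [key, det_mul_right_comm, hUU, one_mul, det_diagonal]
  have hprod : ∏ i, μ i = 1 := by
    have := hX.1.det_eq_prod_eigenvalues
    rw [hdX] at this
    exact_mod_cast this.symm
  calc (1 : ℝ) = (∏ i, μ i) ^ (1 - s) := by rw [hprod, Real.one_rpow]
    _ = ∏ i, (μ i) ^ (1 - s) := by
        rw [← Real.finset_prod_rpow _ _ (fun i _ => (hX.eigenvalues_pos i).le)]
    _ ≤ ∏ i, (s + (1 - s) * μ i) := by
        refine Finset.prod_le_prod (fun i _ => Real.rpow_nonneg (hX.eigenvalues_pos i).le _)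
          (fun i _ => ?_)
        have := Real.geom_mean_le_arith_mean2_weighted hs0 (by linarith : (0:ℝ) ≤ 1 - s)
          zero_le_one (hX.eigenvalues_pos i).le (by ring)
        simpa using this

open scoped MatrixOrder in
lemma det_convex_comb_ge_one {n : ℕ} {A B : Matrix (Fin n) (Fin n) ℝ}
    (hA : A.PosDef) (hB : B.PosDef) (hdA : A.det = 1) (hdB : B.det = 1)
    {s : ℝ} (hs0 : 0 ≤ s) (hs1 : s ≤ 1) :
    1 ≤ (s • A + (1 - s) • B).det := by
  classical
  set S := CFC.sqrt A with hSdef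
  have hS : S.PosSemidef := Matrix.nonneg_iff_posSemidef.mp (CFC.sqrt_nonneg A)
  have hSS : S * S = A := CFC.sqrt_mul_sqrt_self A hA.posSemidef.nonneg
  have hdetSsq : S.det * S.det = 1 := by rw [← det_mul, hSS, hdA]
  have hdetSnn : 0 ≤ S.det := det_nonneg_of_posSemidef hS
  have hdetS : S.det = 1 := by nlinarith
  have hUnit : IsUnit S.det := by rw [hdetS]; exact isUnit_one
  have hSinvH : (S⁻¹)ᴴ = S⁻¹ := by rw [conjTranspose_nonsing_inv, hS.1.eq]
  set X := S⁻¹ * B * S⁻¹ with hXdef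
  have hX : X.PosDef := by
    have := posdef_conj (C := S⁻¹) hB (by rw [det_nonsing_inv, hdetS]; simpa using isUnit_one)
    rwa [hSinvH] at this
  have hdX : X.det = 1 := by
    rw [hXdef, det_mul, det_mul, det_nonsing_inv, hdetS, hdB]; norm_num
  have hSinvS : S * S⁻¹ = 1 := mul_nonsing_inv S hUnit
  have hSSinv : S⁻¹ * S = 1 := nonsing_inv_mul S hUnit
  have key : s • A + (1 - s) • B = S * (s • 1 + (1 - s) • X) * S := by
    have h2 : S * X * S = B := by
      rw [hXdef, ← mul_assoc, ← mul_assoc, hSinvS, mul_assoc, hSSinv, one_mul, mul_one]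
    rw [mul_add, add_mul, mul_smul_comm, mul_smul_comm, smul_mul_assoc, smul_mul_assoc,
      mul_one, hSS, h2]
  rw [key, det_mul, det_mul, hdetS, one_mul, mul_one]
  exact det_one_convex_comb_id hX hdX hs0 hs1


lemma posdef_smul' {n : ℕ} {A : Matrix (Fin n) (Fin n) ℝ} (hA : A.PosDef) {c : ℝ}
    (hc : 0 < c) : (c • A).PosDef := by
  refine PosDef.of_dotProduct_mulVec_pos ?_ fun x hx => ?_
  · unfold Matrix.IsHermitian
    rw [conjTranspose_smul, hA.1.eq, star_trivial]
  · rw [smul_mulVec, dotProduct_smul, smul_eq_mul]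
    exact mul_pos hc (hA.dotProduct_mulVec_pos hx)

lemma posdef_convex_comb {n : ℕ} {A B : Matrix (Fin n) (Fin n) ℝ}
    (hA : A.PosDef) (hB : B.PosDef) {s : ℝ} (hs0 : 0 ≤ s) (hs1 : s ≤ 1) :
    (s • A + (1 - s) • B).PosDef := by
  refine PosDef.of_dotProduct_mulVec_pos ?_ fun x hx => ?_
  · unfold Matrix.IsHermitian
    rw [conjTranspose_add, conjTranspose_smul, conjTranspose_smul, hA.1.eq, hB.1.eq,
      star_trivial, star_trivial]
  · have hp := hA.dotProduct_mulVec_pos hx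
    have hq := hB.dotProduct_mulVec_pos hx
    rw [add_mulVec, dotProduct_add, smul_mulVec, smul_mulVec, dotProduct_smul,
      dotProduct_smul, smul_eq_mul, smul_eq_mul]
    rcases eq_or_lt_of_le hs0 with h | h
    · rw [← h]; simpa using hq
    · have : 0 ≤ (1 - s) * (star x ⬝ᵥ B *ᵥ x) := mul_nonneg (by linarith) hq.le
      nlinarith

/-- For an open set `K ⊆ ℝ^d` of volume one and a convex `M ⊆ ℝ^d`,
the set `S = {(a, A) : A symmetric positive definite, det A = 1, a + A·K ⊆ M}`
is empty or contractible. -/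
theorem witness_set_empty_or_contractible (d : ℕ) (K M : Set (Fin d → ℝ))
    (hKopen : IsOpen K) (hKvol : volume K = 1) (hM : Convex ℝ M) :
    ({p : (Fin d → ℝ) × Matrix (Fin d) (Fin d) ℝ |
        p.2.IsSymm ∧ p.2.PosDef ∧ p.2.det = 1 ∧
        (fun x => p.1 + p.2.mulVec x) '' K ⊆ M} = ∅) ∨
      ContractibleSpace ({p : (Fin d → ℝ) × Matrix (Fin d) (Fin d) ℝ |
        p.2.IsSymm ∧ p.2.PosDef ∧ p.2.det = 1 ∧
        (fun x => p.1 + p.2.mulVec x) '' K ⊆ M} : Set _) := by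
  classical
  set S : Set ((Fin d → ℝ) × Matrix (Fin d) (Fin d) ℝ) :=
    {p | p.2.IsSymm ∧ p.2.PosDef ∧ p.2.det = 1 ∧
        (fun x => p.1 + p.2.mulVec x) '' K ⊆ M} with hSdef
  rcases S.eq_empty_or_nonempty with h | ⟨p₀, hp₀⟩
  · exact Or.inl h
  right
  obtain ⟨x₀, hx₀⟩ : K.Nonempty :=
    nonempty_of_measure_ne_zero (by rw [hKvol]; exact one_ne_zero)
  obtain ⟨hA₀symm, hA₀pos, hA₀det, hA₀sub⟩ := hp₀
  -- the homotopy data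
  let C : unitInterval × ↥S → Matrix (Fin d) (Fin d) ℝ :=
    fun z => (z.1 : ℝ) • p₀.2 + (1 - (z.1 : ℝ)) • z.2.1.2
  have hCpos : ∀ z, (C z).PosDef := fun z =>
    posdef_convex_comb hA₀pos z.2.2.2.1 z.1.2.1 z.1.2.2
  have hCdet1 : ∀ z, 1 ≤ (C z).det := fun z =>
    det_convex_comb_ge_one hA₀pos z.2.2.2.1 hA₀det z.2.2.2.2.1 z.1.2.1 z.1.2.2
  let r : unitInterval × ↥S → ℝ := fun z => (C z).det ^ (-(1 / (d : ℝ)) : ℝ)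
  have hr0 : ∀ z, 0 < r z := fun z => Real.rpow_pos_of_pos (hCpos z).det_pos _
  have hr1 : ∀ z, r z ≤ 1 := fun z =>
    Real.rpow_le_one_of_one_le_of_nonpos (hCdet1 z)
      (neg_nonpos.2 (by positivity))
  let F : unitInterval × ↥S → (Fin d → ℝ) × Matrix (Fin d) (Fin d) ℝ :=
    fun z => ((z.1 : ℝ) • p₀.1 + (1 - (z.1 : ℝ)) • z.2.1.1
        + (1 - r z) • ((C z) *ᵥ x₀), r z • C z)
  have hmem : ∀ z, F z ∈ S := by
    rintro z
    obtain ⟨hqsymm, hqpos, hqdet, hqsub⟩ := z.2.2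
    set s : ℝ := (z.1 : ℝ) with hs
    have hs0 : 0 ≤ s := z.1.2.1
    have hs1 : s ≤ 1 := z.1.2.2
    refine ⟨?_, posdef_smul' (hCpos z) (hr0 z), ?_, ?_⟩
    · show (r z • C z)ᵀ = r z • C z
      rw [transpose_smul]
      congr 1
      show (C z)ᵀ = C z
      show ((z.1 : ℝ) • p₀.2 + (1 - (z.1 : ℝ)) • z.2.1.2)ᵀ = _
      rw [transpose_add, transpose_smul, transpose_smul, hA₀symm.eq, hqsymm.eq]
    · rw [det_smul, Fintype.card_fin]
      rcases Nat.eq_zero_or_pos d with hd | hd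
      · subst hd
        simp [Matrix.det_isEmpty]
      · have hdet0 : (0 : ℝ) < (C z).det := (hCpos z).det_pos
        have : (r z) ^ d = ((C z).det)⁻¹ := by
          rw [← Real.rpow_natCast (r z) d]
          show (((C z).det ^ (-(1 / (d : ℝ)) : ℝ)) ^ ((d : ℕ) : ℝ)) = _
          rw [← Real.rpow_mul hdet0.le]
          have : (-(1 / (d : ℝ)) : ℝ) * ((d : ℕ) : ℝ) = -1 := by
            have : (d : ℝ) ≠ 0 := Nat.cast_ne_zero.2 hd.ne'
            field_simp
          rw [this, Real.rpow_neg_one]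
        rw [this, inv_mul_cancel₀ hdet0.ne']
    · rintro y ⟨x, hxK, rfl⟩
      have hmem' : ∀ w ∈ K,
          (s • p₀.1 + (1 - s) • z.2.1.1) + C z *ᵥ w ∈ M := by
        intro w hw
        have e2 : (s • p₀.1 + (1 - s) • z.2.1.1) + C z *ᵥ w
            = s • (p₀.1 + p₀.2 *ᵥ w)
              + (1 - s) • (z.2.1.1 + z.2.1.2 *ᵥ w) := by
          show _ + ((s • p₀.2 + (1 - s) • z.2.1.2) *ᵥ w) = _
          rw [add_mulVec, smul_mulVec, smul_mulVec]
          module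
        rw [e2]
        exact hM (hA₀sub ⟨w, hw, rfl⟩) (hqsub ⟨w, hw, rfl⟩) hs0 (by linarith) (by ring)
      have e : (F z).1 + (F z).2 *ᵥ x
          = (1 - r z) • ((s • p₀.1 + (1 - s) • z.2.1.1) + C z *ᵥ x₀)
            + r z • ((s • p₀.1 + (1 - s) • z.2.1.1) + C z *ᵥ x) := by
        show (s • p₀.1 + (1 - s) • z.2.1.1 + (1 - r z) • (C z *ᵥ x₀))
            + (r z • C z) *ᵥ x = _
        rw [smul_mulVec]
        module
      show (F z).1 + (F z).2 *ᵥ x ∈ M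
      rw [e]
      exact hM (hmem' x₀ hx₀) (hmem' x hxK) (by have := hr1 z; linarith) (hr0 z).le
        (by ring)
  have hcs : Continuous fun z : unitInterval × ↥S => (z.1 : ℝ) :=
    continuous_subtype_val.comp continuous_fst
  have hcb : Continuous fun z : unitInterval × ↥S => z.2.1.1 :=
    continuous_fst.comp (continuous_subtype_val.comp continuous_snd)
  have hcB : Continuous fun z : unitInterval × ↥S => z.2.1.2 :=
    continuous_snd.comp (continuous_subtype_val.comp continuous_snd)
  have hcC : Continuous C :=
    (hcs.smul continuous_const).add ((continuous_const.sub hcs).smul hcB)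
  have hcr : Continuous r :=
    hcC.matrix_det.rpow_const fun z => Or.inl (hCpos z).det_pos.ne'
  have hcF : Continuous F := by
    refine Continuous.prodMk ?_ (hcr.smul hcC)
    exact ((hcs.smul continuous_const).add ((continuous_const.sub hcs).smul hcb)).add
      ((continuous_const.sub hcr).smul (hcC.matrix_mulVec continuous_const))
  -- assemble the contraction
  rw [contractible_iff_id_nullhomotopic]
  refine ⟨⟨p₀, hA₀symm, hA₀pos, hA₀det, hA₀sub⟩, ⟨?_⟩⟩
  exact
  { toFun := fun z => ⟨F z, hmem z⟩
    continuous_toFun := hcF.subtype_mk _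
    map_zero_left := by
      intro q
      apply Subtype.ext
      show F (0, q) = _
      have hq3 : q.1.2.det = 1 := q.2.2.2.1
      have hC0 : C (0, q) = q.1.2 := by
        show (((0 : unitInterval) : ℝ)) • p₀.2 + _ • _ = _
        simp
      have hr0' : r (0, q) = 1 := by
        show (C (0, q)).det ^ (-(1 / (d : ℝ)) : ℝ) = 1
        rw [hC0, hq3, Real.one_rpow]
      show ((((0:unitInterval) : ℝ)) • p₀.1 + _ + _, _) = _
      rw [hC0]
      ext <;> simp [hr0']
    map_one_left := by
      intro q
      apply Subtype.ext
      have hC1 : C (1, q) = p₀.2 := by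
        show (((1 : unitInterval) : ℝ)) • p₀.2 + _ • _ = _
        simp
      have hr1' : r (1, q) = 1 := by
        show (C (1, q)).det ^ (-(1 / (d : ℝ)) : ℝ) = 1
        rw [hC1, hA₀det, Real.one_rpow]
      show ((((1:unitInterval) : ℝ)) • p₀.1 + _ + _, _) = _
      rw [hC1]
      ext <;> simp [hr1'] }
end

section
/- Helly for box diameter: Let 𝓕 be a finite family of convex sets in ℝ^d such that the intersection of every 2d or fewer members contains an axis-parallel box of (Euclidean) diameter at least one. Then ∩𝓕 contains an axis-parallel box of diameter at least d^{-1/2}. -/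
open Pointwise

/-- An axis-parallel box in `ℝ^d`: a product of compact intervals. -/
def IsAxisParallelBox {d : ℕ} (B : Set (EuclideanSpace ℝ (Fin d))) : Prop :=
  ∃ a b : Fin d → ℝ, (∀ i, a i ≤ b i) ∧
    B = {x : EuclideanSpace ℝ (Fin d) | ∀ i, x i ∈ Set.Icc (a i) (b i)}

/-- The diameter of an axis-parallel box is the distance between its two extreme corners. -/
private lemma box_diam {d : ℕ} (a b : EuclideanSpace ℝ (Fin d)) (hab : ∀ i, a i ≤ b i) :
    Metric.diam {x : EuclideanSpace ℝ (Fin d) | ∀ i, x i ∈ Set.Icc (a i) (b i)}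
      = dist a b := by
  set B := {x : EuclideanSpace ℝ (Fin d) | ∀ i, x i ∈ Set.Icc (a i) (b i)} with hB
  have ha : a ∈ B := fun i => ⟨le_refl _, hab i⟩
  have hb : b ∈ B := fun i => ⟨hab i, le_refl _⟩
  have key : ∀ x ∈ B, ∀ y ∈ B, dist x y ≤ dist a b := by
    intro x hx y hy
    rw [EuclideanSpace.dist_eq, EuclideanSpace.dist_eq]
    apply Real.sqrt_le_sqrt
    apply Finset.sum_le_sum
    intro i _
    have h1 := hx i
    have h2 := hy i
    have hd : dist (x i) (y i) ≤ dist (a i) (b i) := by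
      rw [Real.dist_eq, Real.dist_eq]
      have habs : |a i - b i| = b i - a i := by
        rw [abs_of_nonpos (by linarith [hab i])]; ring
      rw [habs, abs_le]
      constructor
      · linarith [h1.1, h1.2, h2.1, h2.2]
      · linarith [h1.1, h1.2, h2.1, h2.2]
    exact pow_le_pow_left₀ dist_nonneg hd 2
  refine le_antisymm (Metric.diam_le_of_forall_dist_le dist_nonneg key) ?_
  exact Metric.dist_le_diam_of_mem (Metric.isBounded_iff.mpr ⟨dist a b, key⟩) ha hb

/-- Helly for box diameter: if every `2d` or fewer members of a finite
family of convex sets in `ℝ^d` have intersection containing an axis-parallel box of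
Euclidean diameter at least one, then the intersection of the whole family contains an
axis-parallel box of diameter at least `d^{-1/2}`. -/
theorem helly_box_diameter (d : ℕ)
    (F : Finset (Set (EuclideanSpace ℝ (Fin d)))) (hF : ∀ S ∈ F, Convex ℝ S)
    (h : ∀ G ⊆ F, G.card ≤ 2 * d →
      ∃ B, IsAxisParallelBox B ∧ 1 ≤ Metric.diam B ∧
        B ⊆ ⋂₀ (G : Set (Set (EuclideanSpace ℝ (Fin d))))) :
    ∃ B, IsAxisParallelBox B ∧ 1 / Real.sqrt d ≤ Metric.diam B ∧
      B ⊆ ⋂₀ (F : Set (Set (EuclideanSpace ℝ (Fin d)))) := by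
  classical
  -- Dispose of the degenerate case `d = 0`, where the hypothesis is contradictory.
  rcases Nat.eq_zero_or_pos d with rfl | hd
  · exfalso
    obtain ⟨B, ⟨a, b, hab, rfl⟩, hdiam, -⟩ := h ∅ (Finset.empty_subset F) (by simp)
    have hsub : ({x : EuclideanSpace ℝ (Fin 0) | ∀ i, x i ∈ Set.Icc (a i) (b i)} :
        Set (EuclideanSpace ℝ (Fin 0))).Subsingleton := by
      intro x _ y _
      ext i
      exact i.elim0
    rw [Metric.diam_subsingleton hsub] at hdiam
    linarith
  -- `d ≥ 1`: write `d = e + 1`.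
  obtain ⟨e, rfl⟩ : ∃ e, d = e + 1 := ⟨d - 1, (Nat.succ_pred_eq_of_pos hd).symm⟩
  have hsqrt1 : (1 : ℝ) ≤ Real.sqrt (e + 1 : ℕ) := by
    rw [show (1 : ℝ) = Real.sqrt 1 by simp]
    apply Real.sqrt_le_sqrt
    push_cast
    linarith
  have hsqrtpos : (0 : ℝ) < Real.sqrt (e + 1 : ℕ) := lt_of_lt_of_le one_pos hsqrt1
  -- If the family is empty, any box of diameter `≥ 1` works.
  rcases Finset.eq_empty_or_nonempty F with rfl | ⟨S₀, hS₀⟩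
  · obtain ⟨B, hbox, hdiam, -⟩ := h ∅ (by simp) (by simp)
    refine ⟨B, hbox, ?_, by simp⟩
    have : 1 / Real.sqrt (e + 1 : ℕ) ≤ 1 := by
      rw [div_le_one hsqrtpos]; exact hsqrt1
    linarith
  -- From the first `e` side lengths, recover all side lengths so that their sum is `1`.
  set L : (Fin e → ℝ) → (Fin (e + 1) → ℝ) :=
    fun m => Fin.snoc m (1 - ∑ j, m j) with hL
  have hLsum : ∀ m : Fin e → ℝ, ∑ i, L m i = 1 := by
    intro m
    rw [Fin.sum_univ_castSucc]
    simp [hL]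
  have hLaff : ∀ (m m' : Fin e → ℝ) (t s : ℝ), t + s = 1 →
      L (t • m + s • m') = t • L m + s • L m' := by
    intro m m' t s hts
    funext i
    refine Fin.lastCases ?_ ?_ i
    · have hsumsmul : ∑ j, (t * m j + s * m' j) = t * ∑ j, m j + s * ∑ j, m' j := by
        rw [Finset.sum_add_distrib, Finset.mul_sum, Finset.mul_sum]
      simp only [hL, Fin.snoc_last, Pi.add_apply, Pi.smul_apply, smul_eq_mul]
      rw [hsumsmul]
      linear_combination -hts
    · intro j
      simp [hL, Fin.snoc_castSucc]
  -- The convex parameter set associated to each member of the family.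
  set D : Set (EuclideanSpace ℝ (Fin (e + 1))) → Set ((Fin (e + 1) → ℝ) × (Fin e → ℝ)) := fun S =>
    {p : (Fin (e + 1) → ℝ) × (Fin e → ℝ) | (∀ i, 0 ≤ L p.2 i) ∧
      ∀ x : EuclideanSpace ℝ (Fin (e + 1)),
        (∀ i, x i ∈ Set.Icc (p.1 i) (p.1 i + L p.2 i)) → x ∈ S} with hD
  have hDconv : ∀ S ∈ F, Convex ℝ (D S) := by
    intro S hS p hp q hq t s ht hs hts
    have hfst : ∀ i, (t • p + s • q).1 i = t * p.1 i + s * q.1 i := fun i => rfl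
    have hsnd : (t • p + s • q).2 = t • p.2 + s • q.2 := rfl
    have hlen : ∀ i, L (t • p + s • q).2 i = t * L p.2 i + s * L q.2 i := by
      intro i
      rw [hsnd, hLaff p.2 q.2 t s hts]
      rfl
    constructor
    · intro i
      rw [hlen i]
      have := hp.1 i
      have := hq.1 i
      nlinarith
    · intro x hx
      -- Split `x` as a convex combination of points of the two boxes.
      set lam : Fin (e + 1) → ℝ := fun i =>
        (x i - (t * p.1 i + s * q.1 i)) / (t * L p.2 i + s * L q.2 i) with hlam
      have hw0 : ∀ i, 0 ≤ t * L p.2 i + s * L q.2 i := by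
        intro i
        have := hp.1 i
        have := hq.1 i
        nlinarith
      have hxlo : ∀ i, t * p.1 i + s * q.1 i ≤ x i := by
        intro i
        have := (hx i).1
        rw [hfst i] at this
        exact this
      have hxhi : ∀ i, x i ≤ t * p.1 i + s * q.1 i + (t * L p.2 i + s * L q.2 i) := by
        intro i
        have := (hx i).2
        rw [hfst i, hlen i] at this
        exact this
      have hlam0 : ∀ i, 0 ≤ lam i := fun i =>
        div_nonneg (by linarith [hxlo i]) (hw0 i)
      have hlam1 : ∀ i, lam i ≤ 1 := by
        intro i
        rcases eq_or_lt_of_le (hw0 i) with hw | hw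
        · simp [hlam, ← hw]
        · rw [hlam]
          rw [div_le_one hw]
          linarith [hxhi i]
      have hxeq : ∀ i, x i = (t * p.1 i + s * q.1 i)
          + lam i * (t * L p.2 i + s * L q.2 i) := by
        intro i
        rcases eq_or_lt_of_le (hw0 i) with hw | hw
        · have h1 := hxlo i
          have h2 := hxhi i
          rw [← hw] at h2
          have : x i = t * p.1 i + s * q.1 i := by linarith
          rw [this, ← hw]
          ring
        · rw [hlam]
          field_simp
          ring
      set y : EuclideanSpace ℝ (Fin (e + 1)) := WithLp.toLp 2 fun i => p.1 i + lam i * L p.2 i with hy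
      set y' : EuclideanSpace ℝ (Fin (e + 1)) := WithLp.toLp 2 fun i => q.1 i + lam i * L q.2 i with hy'
      have hyS : y ∈ S := by
        apply hp.2
        intro i
        constructor
        · have : 0 ≤ lam i * L p.2 i := mul_nonneg (hlam0 i) (hp.1 i)
          simp only [hy]
          linarith
        · have : lam i * L p.2 i ≤ L p.2 i := by
            nlinarith [hlam1 i, hp.1 i, hlam0 i]
          simp only [hy]
          linarith
      have hy'S : y' ∈ S := by
        apply hq.2
        intro i
        constructor
        · have : 0 ≤ lam i * L q.2 i := mul_nonneg (hlam0 i) (hq.1 i)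
          simp only [hy']
          linarith
        · have : lam i * L q.2 i ≤ L q.2 i := by
            nlinarith [hlam1 i, hq.1 i, hlam0 i]
          simp only [hy']
          linarith
      have hxcomb : x = t • y + s • y' := by
        ext i
        have : (t • y + s • y' : EuclideanSpace ℝ (Fin (e + 1))) i
            = t * y i + s * y' i := rfl
        rw [this, hxeq i]
        simp only [hy, hy']
        ring
      rw [hxcomb]
      exact hF S hS hyS hy'S ht hs hts
  -- The dimension of the parameter space is `2d - 1`.
  have hrank : Module.finrank ℝ ((Fin (e + 1) → ℝ) × (Fin e → ℝ)) + 1 = 2 * (e + 1) := by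
    rw [Module.finrank_prod, Module.finrank_fin_fun, Module.finrank_fin_fun]
    ring
  -- Apply Helly's theorem to the sets `D S`.
  have key : (⋂ S ∈ F, D S).Nonempty := by
    apply Convex.helly_theorem' hDconv
    intro I hI hcard
    rw [hrank] at hcard
    obtain ⟨B, ⟨a, b, hab, rfl⟩, hdiam, hsub⟩ := h I hI hcard
    rw [box_diam (WithLp.toLp 2 a) (WithLp.toLp 2 b) hab] at hdiam
    set T := ∑ i, (b i - a i) with hT
    have hTnn : 0 ≤ T := Finset.sum_nonneg fun i _ => by linarith [hab i]
    have hT1 : 1 ≤ T := by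
      rw [EuclideanSpace.dist_eq (WithLp.toLp 2 a) (WithLp.toLp 2 b)] at hdiam
      change 1 ≤ Real.sqrt (∑ i, dist (a i) (b i) ^ 2) at hdiam
      have hdist : Real.sqrt (∑ i, dist (a i) (b i) ^ 2) ≤ T := by
        have hsum : ∑ i, dist (a i) (b i) ^ 2 ≤ T ^ 2 := by
          have : ∀ i ∈ Finset.univ, dist (a i) (b i) ^ 2 = (b i - a i) ^ 2 := by
            intro i _
            rw [Real.dist_eq, abs_of_nonpos (by linarith [hab i])]
            ring
          rw [Finset.sum_congr rfl this]
          exact Finset.sum_sq_le_sq_sum_of_nonneg fun i _ => by linarith [hab i]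
        calc Real.sqrt (∑ i, dist (a i) (b i) ^ 2) ≤ Real.sqrt (T ^ 2) :=
              Real.sqrt_le_sqrt hsum
          _ = T := Real.sqrt_sq hTnn
      linarith
    have hTpos : 0 < T := by linarith
    -- Normalize the box: keep the center, scale so the side lengths sum to `1`.
    set l : Fin (e + 1) → ℝ := fun i => (b i - a i) / T with hl
    set c : Fin (e + 1) → ℝ := fun i => (a i + b i) / 2 - l i / 2 with hc
    have hlnn : ∀ i, 0 ≤ l i := fun i => div_nonneg (by linarith [hab i]) hTnn
    have hlle : ∀ i, l i ≤ b i - a i := fun i =>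
      div_le_self (by linarith [hab i]) hT1
    have hTpos' : 0 < T := by linarith
    have hlsum : ∑ i, l i = 1 := by
      simp only [hl]
      rw [← Finset.sum_div, ← hT, div_self (ne_of_gt hTpos')]
    set m : Fin e → ℝ := fun j => l j.castSucc with hm
    have hLm : L m = l := by
      funext i
      refine Fin.lastCases ?_ ?_ i
      · have hcast : ∑ i, l i = (∑ j, l (Fin.castSucc j)) + l (Fin.last e) :=
          Fin.sum_univ_castSucc l
        simp only [hL, hm, Fin.snoc_last]
        rw [hlsum] at hcast
        linarith
      · intro j
        simp [hL, hm, Fin.snoc_castSucc]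
    refine ⟨(c, m), Set.mem_iInter₂.mpr fun S hSmem => ?_⟩
    constructor
    · intro i
      rw [show ((c, m) : (Fin (e + 1) → ℝ) × (Fin e → ℝ)).2 = m from rfl, hLm]
      exact hlnn i
    · intro x hx
      have hxB : ∀ i, x i ∈ Set.Icc (a i) (b i) := by
        intro i
        have hxi := hx i
        rw [show ((c, m) : (Fin (e + 1) → ℝ) × (Fin e → ℝ)).1 = c from rfl, show ((c, m) : (Fin (e + 1) → ℝ) × (Fin e → ℝ)).2 = m from rfl, hLm] at hxi
        have h1 := hxi.1
        have h2 := hxi.2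
        have hc1 : a i ≤ c i := by
          rw [hc]
          have := hlle i
          linarith
        have hc2 : c i + l i ≤ b i := by
          rw [hc]
          have := hlle i
          linarith
        exact ⟨by linarith, by linarith⟩
      exact (hsub hxB) S hSmem
  -- Extract the common box and verify its diameter.
  obtain ⟨⟨c, m⟩, hmem⟩ := key
  set l : Fin (e + 1) → ℝ := L m with hl
  have hmem' := Set.mem_iInter₂.mp hmem
  have hlnn : ∀ i, 0 ≤ l i := (hmem' S₀ hS₀).1
  have hlsum : ∑ i, l i = 1 := hLsum m
  set b : Fin (e + 1) → ℝ := fun i => c i + l i with hb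
  refine ⟨{x : EuclideanSpace ℝ (Fin (e + 1)) | ∀ i, x i ∈ Set.Icc (c i) (b i)},
    ⟨c, b, fun i => by simp only [hb]; linarith [hlnn i], rfl⟩, ?_, ?_⟩
  · rw [box_diam (WithLp.toLp 2 c) (WithLp.toLp 2 b) (fun i => by simp only [hb]; linarith [hlnn i])]
    rw [EuclideanSpace.dist_eq]
    have hterm : ∀ i ∈ Finset.univ, dist ((WithLp.toLp 2 c : EuclideanSpace ℝ (Fin (e + 1))) i)
        ((WithLp.toLp 2 b : EuclideanSpace ℝ (Fin (e + 1))) i) ^ 2 = l i ^ 2 := by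
      intro i _
      rw [Real.dist_eq]
      rw [show (WithLp.toLp 2 b : EuclideanSpace ℝ (Fin (e + 1))) i = c i + l i from rfl]
      rw [show c i - (c i + l i) = -(l i) by ring, abs_neg, abs_of_nonneg (hlnn i)]
    rw [Finset.sum_congr rfl hterm]
    have hCS : (1 : ℝ) ≤ (e + 1 : ℕ) * ∑ i, l i ^ 2 := by
      have := sq_sum_le_card_mul_sum_sq (s := Finset.univ) (f := l)
      rw [hlsum] at this
      simpa using this
    have hne : ((e : ℝ) + 1) ≠ 0 := by positivity
    have hinv : (1 : ℝ) / ((e : ℝ) + 1) ≤ ∑ i, l i ^ 2 := by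
      rw [div_le_iff₀ (by positivity)]
      push_cast at hCS ⊢
      nlinarith [hCS]
    have hcast : ((e + 1 : ℕ) : ℝ) = (e : ℝ) + 1 := by push_cast; ring
    rw [hcast, one_div, ← Real.sqrt_inv]
    apply Real.sqrt_le_sqrt
    rw [inv_eq_one_div]
    exact hinv
  · intro x hx
    rw [Set.mem_sInter]
    intro S hS
    exact (hmem' S hS).2 x hx
end

section
/- A convex combination in S*(M) stays in S*(M): Let M ⊆ ℝ^d be convex, B_d the unit ball, and S*(M) the set of symmetric positive definite matrices A with sum of entries 1 such that (det A)^{-1/d}·A·B_d ⊆ M. Then S*(M) is convex. -/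
open Pointwise

open Finset in
lemma geom_superadd {d : ℕ} (hd : d ≠ 0) (lam : Fin d → ℝ) (hlam : ∀ i, 0 < lam i)
    {a b : ℝ} (ha : 0 < a) (hb : 0 < b) :
    a + b * (∏ i, lam i) ^ ((1:ℝ)/d) ≤ (∏ i, (a + b * lam i)) ^ ((1:ℝ)/d) := by
  have hp : ∀ i, 0 < a + b * lam i := fun i => add_pos ha (mul_pos hb (hlam i))
  have hP : 0 < ∏ i, (a + b * lam i) := Finset.prod_pos fun i _ => hp i
  have hL : 0 < ∏ i, lam i := Finset.prod_pos fun i _ => hlam i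
  have hw : ∀ i ∈ univ, (0:ℝ) ≤ (1:ℝ)/d := fun (_ : Fin d) _ => by positivity
  have hw' : ∑ _i : Fin d, (1:ℝ)/d = 1 := by
    rw [Finset.sum_const, card_univ, Fintype.card_fin, nsmul_eq_mul]
    field_simp
  have g1 := Real.geom_mean_le_arith_mean_weighted univ (fun _ => (1:ℝ)/d)
    (fun i => a / (a + b * lam i)) hw hw' (fun i _ => (div_pos ha (hp i)).le)
  have g2 := Real.geom_mean_le_arith_mean_weighted univ (fun _ => (1:ℝ)/d)
    (fun i => b * lam i / (a + b * lam i)) hw hw' (fun i _ => (div_pos (mul_pos hb (hlam i)) (hp i)).le)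
  -- rewrite products
  have e1 : ∏ i, (a / (a + b * lam i)) ^ ((1:ℝ)/d)
      = a / (∏ i, (a + b * lam i)) ^ ((1:ℝ)/d) := by
    rw [Real.finset_prod_rpow _ _ (fun i _ => (div_pos ha (hp i)).le) _,
      Finset.prod_div_distrib, Finset.prod_const, card_univ, Fintype.card_fin,
      Real.div_rpow (pow_nonneg ha.le d) hP.le, ← Real.rpow_natCast a d,
      ← Real.rpow_mul ha.le]
    rw [mul_one_div, div_self (by exact_mod_cast hd), Real.rpow_one]
  have e2 : ∏ i, (b * lam i / (a + b * lam i)) ^ ((1:ℝ)/d)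
      = b * (∏ i, lam i) ^ ((1:ℝ)/d) / (∏ i, (a + b * lam i)) ^ ((1:ℝ)/d) := by
    rw [Real.finset_prod_rpow _ _ (fun i _ => (div_pos (mul_pos hb (hlam i)) (hp i)).le) _,
      Finset.prod_div_distrib, Finset.prod_mul_distrib, Finset.prod_const, card_univ,
      Fintype.card_fin, Real.div_rpow (mul_nonneg (pow_nonneg hb.le d) hL.le) hP.le,
      Real.mul_rpow (pow_nonneg hb.le d) hL.le, ← Real.rpow_natCast b d,
      ← Real.rpow_mul hb.le]
    rw [mul_one_div, div_self (by exact_mod_cast hd), Real.rpow_one]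
  rw [e1] at g1
  rw [e2] at g2
  have hsum : a / (∏ i, (a + b * lam i)) ^ ((1:ℝ)/d)
      + b * (∏ i, lam i) ^ ((1:ℝ)/d) / (∏ i, (a + b * lam i)) ^ ((1:ℝ)/d) ≤ 1 := by
    refine (add_le_add g1 g2).trans (le_of_eq ?_)
    rw [← Finset.sum_add_distrib, Finset.sum_congr rfl
      (fun i _ => by rw [← mul_add, ← add_div, div_self (hp i).ne', mul_one])]
    exact hw'
  rw [← add_div, div_le_one (by positivity)] at hsum
  exact hsum

open Matrix in
lemma posdef_congr {d : ℕ} {B T : Matrix (Fin d) (Fin d) ℝ} (hB : B.PosDef)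
    (hT : T.IsHermitian) (hTu : IsUnit T.det) : (T * B * T).PosDef := by
  refine Matrix.PosDef.of_dotProduct_mulVec_pos (by rw [Matrix.IsHermitian, conjTranspose_mul, conjTranspose_mul,
    hT.eq, hB.isHermitian.eq, Matrix.mul_assoc]) (fun x hx => ?_)
  have hy : T *ᵥ x ≠ 0 := fun h => hx <| by
    have := Matrix.mulVec_injective_iff_isUnit.mpr ((Matrix.isUnit_iff_isUnit_det T).mpr hTu)
    exact this (by simpa using h)
  calc star x ⬝ᵥ (T * B * T) *ᵥ x
      = (star x ᵥ* T) ⬝ᵥ (B *ᵥ (T *ᵥ x)) := by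
        rw [← Matrix.mulVec_mulVec, ← Matrix.mulVec_mulVec, dotProduct_mulVec]
    _ = star (T *ᵥ x) ⬝ᵥ B *ᵥ (T *ᵥ x) := by rw [star_mulVec, hT.eq]
    _ > 0 := hB.dotProduct_mulVec_pos hy

open scoped MatrixOrder in
open Matrix in
lemma minkowski_det {d : ℕ} (hd : d ≠ 0) {A B : Matrix (Fin d) (Fin d) ℝ}
    (hA : A.PosDef) (hB : B.PosDef) {a b : ℝ} (ha : 0 < a) (hb : 0 < b) :
    a * A.det ^ ((1:ℝ)/d) + b * B.det ^ ((1:ℝ)/d) ≤ (a • A + b • B).det ^ ((1:ℝ)/d) := by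
  classical
  set S := CFC.sqrt A with hSdef
  have hS : S.PosSemidef := (CFC.sqrt_nonneg A).posSemidef
  have hSS : S * S = A := CFC.sqrt_mul_sqrt_self A hA.posSemidef.nonneg
  have hdetS : 0 < S.det := by
    have h1 : S.det * S.det = A.det := by rw [← det_mul, hSS]
    have h2 : 0 ≤ S.det := by
      rw [hS.1.det_eq_prod_eigenvalues]
      exact Finset.prod_nonneg fun i _ => by simpa using hS.eigenvalues_nonneg i
    nlinarith [hA.det_pos]
  have hSu : IsUnit S.det := hdetS.ne'.isUnit
  set T := S⁻¹ with hTdef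
  have hST : S * T = 1 := Matrix.mul_nonsing_inv _ hSu
  have hTS : T * S = 1 := Matrix.nonsing_inv_mul _ hSu
  have hTherm : T.IsHermitian := hS.isHermitian.inv
  have hdetT : T.det = S.det⁻¹ := by rw [hTdef, Matrix.det_nonsing_inv, Ring.inverse_eq_inv']
  have hTu : IsUnit T.det := by rw [hdetT]; exact (inv_ne_zero hdetS.ne').isUnit
  set C := T * B * T with hCdef
  have hC : C.PosDef := posdef_congr hB hTherm hTu
  have hBC : S * C * S = B := by
    rw [hCdef, Matrix.mul_assoc, Matrix.mul_assoc, hTS, Matrix.mul_one, ← Matrix.mul_assoc, hST,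
      Matrix.one_mul]
  have key : a • A + b • B = S * (a • (1 : Matrix (Fin d) (Fin d) ℝ) + b • C) * S := by
    rw [Matrix.mul_add, Matrix.add_mul, Matrix.mul_smul, Matrix.smul_mul, Matrix.mul_one,
      Matrix.mul_smul, Matrix.smul_mul, hSS, hBC]
  have hCh : C.IsHermitian := hC.isHermitian
  set ev := hCh.eigenvalues with hev
  have hevpos : ∀ i, 0 < ev i := hC.eigenvalues_pos
  have hdet1 : (a • (1 : Matrix (Fin d) (Fin d) ℝ) + b • C).det = ∏ i, (a + b * ev i) := by
    set V := (hCh.eigenvectorUnitary : Matrix (Fin d) (Fin d) ℝ) with hV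
    have hVV : V * star V = 1 := (Matrix.mem_unitaryGroup_iff).mp hCh.eigenvectorUnitary.2
    have hVV' : star V * V = 1 := (Matrix.mem_unitaryGroup_iff').mp hCh.eigenvectorUnitary.2
    have hspec : C = V * diagonal (RCLike.ofReal ∘ ev) * star V := hCh.spectral_theorem
    have hdiag : a • (1 : Matrix (Fin d) (Fin d) ℝ) + b • diagonal (RCLike.ofReal ∘ ev)
        = diagonal (fun i => a + b * ev i) := by
      rw [RCLike.ofReal_real_eq_id, Matrix.smul_one_eq_diagonal, ← Matrix.diagonal_smul,
        ← Matrix.diagonal_add]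
      rfl
    have hmain : a • (1 : Matrix (Fin d) (Fin d) ℝ) + b • C
        = V * (diagonal (fun i => a + b * ev i)) * star V := by
      rw [← hdiag, Matrix.mul_add, Matrix.add_mul, hspec]
      congr 1
      · rw [Matrix.mul_smul, Matrix.smul_mul, Matrix.mul_one, hVV]
      · simp only [Matrix.mul_smul, Matrix.smul_mul]
    rw [hmain, Matrix.det_mul_right_comm, hVV, Matrix.one_mul, det_diagonal]
  have hdetC : C.det = B.det / A.det := by
    rw [hCdef, Matrix.det_mul, Matrix.det_mul, hdetT]
    have : A.det = S.det * S.det := by rw [← det_mul, hSS]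
    rw [this]
    field_simp
  have hprodev : ∏ i, ev i = C.det := by
    rw [hCh.det_eq_prod_eigenvalues]; simp [hev]
  have hdetfull : (a • A + b • B).det = A.det * ∏ i, (a + b * ev i) := by
    have hAS : A.det = S.det * S.det := by rw [← Matrix.det_mul, hSS]
    rw [key, Matrix.det_mul, Matrix.det_mul, hdet1, hAS]
    ring
  rw [hdetfull, Real.mul_rpow hA.det_pos.le (Finset.prod_nonneg fun i _ =>
    (add_pos ha (mul_pos hb (hevpos i))).le)]
  have hgeo := geom_superadd hd ev hevpos ha hb
  rw [hprodev, hdetC] at hgeo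
  calc a * A.det ^ ((1:ℝ)/d) + b * B.det ^ ((1:ℝ)/d)
      = A.det ^ ((1:ℝ)/d) * (a + b * (B.det / A.det) ^ ((1:ℝ)/d)) := by
        rw [Real.div_rpow hB.det_pos.le hA.det_pos.le]
        have hα : (0:ℝ) < A.det ^ ((1:ℝ)/d) := Real.rpow_pos_of_pos hA.det_pos _
        field_simp
    _ ≤ A.det ^ ((1:ℝ)/d) * (∏ i, (a + b * ev i)) ^ ((1:ℝ)/d) := by
        exact mul_le_mul_of_nonneg_left hgeo (Real.rpow_nonneg hA.det_pos.le _)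

lemma matApply_add {d : ℕ} (A B : Matrix (Fin d) (Fin d) ℝ) (x : EuclideanSpace ℝ (Fin d)) :
    matApply (A + B) x = matApply A x + matApply B x := by
  simp [matApply, Matrix.add_mulVec]

lemma matApply_smul {d : ℕ} (c : ℝ) (A : Matrix (Fin d) (Fin d) ℝ)
    (x : EuclideanSpace ℝ (Fin d)) : matApply (c • A) x = c • matApply A x := by
  simp [matApply, Matrix.smul_mulVec]

lemma matApply_smul_vec {d : ℕ} (A : Matrix (Fin d) (Fin d) ℝ) (c : ℝ)
    (x : EuclideanSpace ℝ (Fin d)) : matApply A (c • x) = c • matApply A x := by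
  simp [matApply, Matrix.mulVec_smul]

/-- For a convex `M ⊆ ℝ^d`, the set `S*(M)` of symmetric positive
definite matrices `A` with sum of entries `1` such that `(det A)^{-1/d}·A·B_d ⊆ M`
is convex. -/
theorem convex_normalized_ellipsoid_witness (d : ℕ) (M : Set (EuclideanSpace ℝ (Fin d)))
    (hM : Convex ℝ M) :
    Convex ℝ {A : Matrix (Fin d) (Fin d) ℝ | A.IsSymm ∧ A.PosDef ∧
      (∑ i, ∑ j, A i j) = 1 ∧
      matApply ((A.det ^ (-(1 : ℝ) / d)) • A) ''
        Metric.closedBall (0 : EuclideanSpace ℝ (Fin d)) 1 ⊆ M} := by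
  rintro A ⟨hA1, hA2, hA3, hA4⟩ B ⟨hB1, hB2, hB3, hB4⟩ a b ha hb hab
  rcases eq_or_lt_of_le ha with ha0 | ha
  · have hb1 : b = 1 := by linarith
    have hE : a • A + b • B = B := by rw [← ha0, hb1]; simp
    rw [Set.mem_setOf_eq, hE]
    exact ⟨hB1, hB2, hB3, hB4⟩
  rcases eq_or_lt_of_le hb with hb0 | hb
  · have ha1 : a = 1 := by linarith
    have hE : a • A + b • B = A := by rw [← hb0, ha1]; simp
    rw [Set.mem_setOf_eq, hE]
    exact ⟨hA1, hA2, hA3, hA4⟩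
  have hd : d ≠ 0 := by
    rintro rfl
    simp at hA3
  -- basic facts
  have hC2 : (a • A + b • B).PosDef := by
    refine Matrix.PosDef.of_dotProduct_mulVec_pos ?_ (fun x hx => ?_)
    · rw [Matrix.IsHermitian, Matrix.conjTranspose_add, Matrix.conjTranspose_smul,
        Matrix.conjTranspose_smul, hA2.isHermitian.eq, hB2.isHermitian.eq]
      simp
    · rw [Matrix.add_mulVec, Matrix.smul_mulVec, Matrix.smul_mulVec,
        dotProduct_add, dotProduct_smul, dotProduct_smul]
      have := hA2.dotProduct_mulVec_pos hx
      have := hB2.dotProduct_mulVec_pos hx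
      simp only [smul_eq_mul]
      nlinarith
  refine ⟨?_, hC2, ?_, ?_⟩
  · rw [Matrix.IsSymm, Matrix.transpose_add, Matrix.transpose_smul, Matrix.transpose_smul,
      hA1, hB1]
  · simp only [Matrix.add_apply, Matrix.smul_apply, smul_eq_mul, Finset.sum_add_distrib,
      ← Finset.mul_sum, hA3, hB3]
    linarith
  · -- the inclusion
    rintro z ⟨x, hx, rfl⟩
    rw [Metric.mem_closedBall, dist_zero_right] at hx
    have hdA := hA2.det_pos
    have hdB := hB2.det_pos
    have hdC := hC2.det_pos
    set α := A.det ^ ((1:ℝ)/d) with hα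
    set β := B.det ^ ((1:ℝ)/d) with hβ
    set γ := (a • A + b • B).det ^ ((1:ℝ)/d) with hγ
    have hαp : 0 < α := Real.rpow_pos_of_pos hdA _
    have hβp : 0 < β := Real.rpow_pos_of_pos hdB _
    have hγp : 0 < γ := Real.rpow_pos_of_pos hdC _
    have hmink : a * α + b * β ≤ γ := minkowski_det hd hA2 hB2 ha hb
    have hexpA : A.det ^ (-(1:ℝ)/d) = α⁻¹ := by
      rw [hα, ← Real.rpow_neg hdA.le, neg_div]
    have hexpB : B.det ^ (-(1:ℝ)/d) = β⁻¹ := by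
      rw [hβ, ← Real.rpow_neg hdB.le, neg_div]
    have hexpC : (a • A + b • B).det ^ (-(1:ℝ)/d) = γ⁻¹ := by
      rw [hγ, ← Real.rpow_neg hdC.le, neg_div]
    set t := (a * α + b * β) / γ with ht
    have htpos : 0 < t := div_pos (by positivity) hγp
    have ht1 : t ≤ 1 := (div_le_one hγp).mpr hmink
    have hyball : t • x ∈ Metric.closedBall (0 : EuclideanSpace ℝ (Fin d)) 1 := by
      rw [Metric.mem_closedBall, dist_zero_right, norm_smul]
      calc ‖t‖ * ‖x‖ ≤ 1 * 1 := by
            apply mul_le_mul _ hx (norm_nonneg _) zero_le_one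
            rw [Real.norm_eq_abs, abs_of_pos htpos]; exact ht1
        _ = 1 := by ring
    have hpA : matApply ((A.det ^ (-(1:ℝ)/d)) • A) (t • x) ∈ M :=
      hA4 ⟨t • x, hyball, rfl⟩
    have hpB : matApply ((B.det ^ (-(1:ℝ)/d)) • B) (t • x) ∈ M :=
      hB4 ⟨t • x, hyball, rfl⟩
    have hcomb := hM hpA hpB (le_of_lt (by positivity : (0:ℝ) < a * α / γ / t))
      (le_of_lt (by positivity : (0:ℝ) < b * β / γ / t)) (by
        rw [ht]; field_simp)
    convert hcomb using 1
    rw [hexpA, hexpB, hexpC, matApply_smul, matApply_smul, matApply_smul,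
      matApply_add, matApply_smul, matApply_smul, matApply_smul_vec, matApply_smul_vec]
    match_scalars <;> field_simp <;> ring
end

section
/- Tverberg theorem via Minkowski parametrization: Let 𝓒 be a family of convex sets in ℝ^d with a surjective map D : ℝ^l → 𝓒 satisfying D(conv F) ⊆ conv(D(F)) for every finite F ⊆ ℝ^l (where conv(D(F)) means the convex hull of the union), and let f : 𝓒 → ℝ be such that f ∘ D is min-concave on ℝ^l. Given a family 𝓕 ⊆ 𝓒 of (r-1)(l+1)+1 sets with f(K) ≥ 1 for all K ∈ 𝓕, there is a partition of 𝓕 into r parts 𝓐_1, …, 𝓐_r and a set K ∈ 𝓒 with f(K) ≥ 1 contained in ∩_{j=1}^r conv(∪𝓐_j). -/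
open Finset Metric RealInnerProductSpace Module

open Classical in
noncomputable def repIdx {ι E : Type*} [Nonempty ι] (y : ι → E) (e : E) : ι :=
  if h : ∃ i, y i = e then h.choose else Classical.arbitrary ι

open Classical in
lemma repIdx_spec {ι E : Type*} [Nonempty ι] (y : ι → E) {e : E} (he : e ∈ Set.range y) :
    y (repIdx y e) = e := by
  obtain ⟨i, hi⟩ := he
  rw [repIdx, dif_pos ⟨i, hi⟩]
  exact (⟨i, hi⟩ : ∃ i, y i = e).choose_spec

lemma exists_weights {ι : Type*} [Fintype ι] [Nonempty ι] {E : Type*} [AddCommGroup E]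
    [Module ℝ E] {y : ι → E} {p : E} (hp : p ∈ convexHull ℝ (Set.range y)) :
    ∃ μ : ι → ℝ, (∀ i, 0 ≤ μ i) ∧ ∑ i, μ i = 1 ∧ ∑ i, μ i • y i = p := by
  classical
  have hs : Set.range y = ↑(Finset.univ.image y) := by simp
  rw [hs, Finset.convexHull_eq] at hp
  obtain ⟨w, hw0, hw1, hcm⟩ := hp
  set s := Finset.univ.image y with hsdef
  refine ⟨fun i => ∑ e ∈ s.filter (fun e => repIdx y e = i), w e, ?_, ?_, ?_⟩
  · intro i
    exact Finset.sum_nonneg fun e he => hw0 e (Finset.mem_filter.1 he).1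
  · rw [Finset.sum_fiberwise_of_maps_to (fun e _ => Finset.mem_univ (repIdx y e))]
    exact hw1
  · have : ∀ i : ι, (∑ e ∈ s.filter (fun e => repIdx y e = i), w e) • y i
        = ∑ e ∈ s.filter (fun e => repIdx y e = i), w e • e := by
      intro i
      rw [Finset.sum_smul]
      refine Finset.sum_congr rfl fun e he => ?_
      obtain ⟨hes, hre⟩ := Finset.mem_filter.1 he
      have hey : e ∈ Set.range y := by rw [hs]; exact_mod_cast hes
      rw [← hre, repIdx_spec y hey]
    simp_rw [this]
    rw [Finset.sum_fiberwise_of_maps_to (fun e _ => Finset.mem_univ (repIdx y e))]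
    rw [← hcm, Finset.centerMass_eq_of_sum_1 _ _ hw1]
    rfl

variable {E : Type*} [NormedAddCommGroup E] [InnerProductSpace ℝ E]

lemma drop_index [FiniteDimensional ℝ E] {n : ℕ} (hn : finrank ℝ E < n)
    (y : Fin n → E) {p : E} (hp : p ∈ convexHull ℝ (Set.range y)) (hp0 : p ≠ 0)
    (hineq : ∀ i, ‖p‖ ^ 2 ≤ ⟪p, y i⟫) :
    ∃ i0 : Fin n, p ∈ convexHull ℝ (y '' {i | i ≠ i0}) := by
  classical
  have hnpos : 0 < n := lt_of_le_of_lt (Nat.zero_le _) hn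
  have : Nonempty (Fin n) := ⟨⟨0, hnpos⟩⟩
  have hs : Set.range y = ↑(Finset.univ.image y) := by simp
  rw [hs, Finset.convexHull_eq] at hp
  obtain ⟨w, hw0, hw1, hcm⟩ := hp
  set s := Finset.univ.image y with hsdef
  have hse : ∀ e ∈ s, ‖p‖ ^ 2 ≤ ⟪p, e⟫ := by
    intro e he
    obtain ⟨i, -, rfl⟩ := Finset.mem_image.1 he
    exact hineq i
  have hrep : p = ∑ e ∈ s, w e • e := by
    rw [← hcm, Finset.centerMass_eq_of_sum_1 _ _ hw1]
    rfl
  have hinner : ⟪p, p⟫ = ∑ e ∈ s, w e * ⟪p, e⟫ := by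
    nth_rewrite 2 [hrep]
    rw [inner_sum]
    exact Finset.sum_congr rfl fun e _ => real_inner_smul_right p e (w e)
  have heq : ∀ e ∈ s, w e * ‖p‖ ^ 2 = w e * ⟪p, e⟫ := by
    have hle : ∀ e ∈ s, w e * ‖p‖ ^ 2 ≤ w e * ⟪p, e⟫ := fun e he =>
      mul_le_mul_of_nonneg_left (hse e he) (hw0 e he)
    have hsum : ∑ e ∈ s, w e * ‖p‖ ^ 2 = ∑ e ∈ s, w e * ⟪p, e⟫ := by
      rw [← hinner, real_inner_self_eq_norm_sq, ← Finset.sum_mul, hw1, one_mul]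
    exact (Finset.sum_eq_sum_iff_of_le hle).1 hsum
  have hplane : ∀ e ∈ s, w e ≠ 0 → ⟪p, e⟫ = ‖p‖ ^ 2 := fun e he hwne =>
    (mul_left_cancel₀ hwne (heq e he)).symm
  set s' := s.filter (fun e => w e ≠ 0) with hs'
  have hps' : p ∈ convexHull ℝ (↑s' : Set E) := by
    rw [← hcm, ← Finset.centerMass_filter_ne_zero (z := id)]
    apply Finset.centerMass_mem_convexHull
    · exact fun e he => hw0 e (Finset.mem_filter.1 he).1
    · rw [Finset.sum_filter_ne_zero, hw1]; exact zero_lt_one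
    · exact fun e he => he
  rw [convexHull_eq_union] at hps'
  simp only [Set.mem_iUnion] at hps'
  obtain ⟨t, hts, hai, hpt⟩ := hps'
  have htne : t.Nonempty := by
    rcases Finset.eq_empty_or_nonempty t with rfl | h
    · simp at hpt
    · exact h
  have : Nonempty (↥t) := htne.to_subtype
  set f : E →ₗ[ℝ] ℝ := (innerSL ℝ p).toLinearMap with hfdef
  have hfp : f p = ‖p‖ ^ 2 := by simp [hfdef, real_inner_self_eq_norm_sq]
  have htplane : ∀ e ∈ t, f e = ‖p‖ ^ 2 := by
    intro e he
    obtain ⟨hes, hwne⟩ := Finset.mem_filter.1 (hts he)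
    simpa [hfdef] using hplane e hes hwne
  have hker : vectorSpan ℝ (↑t : Set E) ≤ LinearMap.ker f := by
    rw [vectorSpan, Submodule.span_le]
    rintro u ⟨a, ha, b, hb, rfl⟩
    simp only [SetLike.mem_coe, LinearMap.mem_ker, vsub_eq_sub, map_sub]
    rw [htplane a ha, htplane b hb, sub_self]
  have hfpne : f p ≠ 0 := by
    rw [hfp]
    exact pow_ne_zero 2 (norm_ne_zero_iff.2 hp0)
  have hkerlt : finrank ℝ (LinearMap.ker f) < finrank ℝ E := by
    apply Submodule.finrank_lt
    intro h
    exact hfpne (LinearMap.mem_ker.1 (h ▸ Submodule.mem_top))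
  have hcard : t.card ≤ finrank ℝ E := by
    have hrange : Set.range (Subtype.val : ↥t → E) = (↑t : Set E) := Subtype.range_val
    have h1 := hai.finrank_vectorSpan_add_one
    rw [hrange, Fintype.card_coe] at h1
    have h2 : finrank ℝ (vectorSpan ℝ (↑t : Set E)) ≤ finrank ℝ (LinearMap.ker f) :=
      Submodule.finrank_mono hker
    omega
  set used : Finset (Fin n) := t.attach.image (fun e => repIdx y e.1) with hused
  have husedcard : used.card < n := by
    calc used.card ≤ t.attach.card := Finset.card_image_le
      _ = t.card := Finset.card_attach
      _ ≤ finrank ℝ E := hcard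
      _ < n := hn
  obtain ⟨i0, hi0⟩ : ∃ i0 : Fin n, i0 ∉ used := by
    by_contra h
    push_neg at h
    have := Finset.eq_univ_iff_forall.2 h
    rw [this, Finset.card_univ, Fintype.card_fin] at husedcard
    exact lt_irrefl _ husedcard
  refine ⟨i0, ?_⟩
  refine convexHull_mono ?_ hpt
  intro e he
  have hes : e ∈ Set.range y := by
    rw [hs]
    exact_mod_cast (Finset.mem_filter.1 (hts he)).1
  refine ⟨repIdx y e, ?_, repIdx_spec y hes⟩
  intro hcontra
  apply hi0
  rw [hused, ← hcontra]
  exact Finset.mem_image.2 ⟨⟨e, he⟩, Finset.mem_attach _ _, rfl⟩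

lemma variational {s : Set E} (hs : Convex ℝ s) {p : E} (hp : p ∈ s)
    (hmin : ∀ z ∈ s, ‖p‖ ≤ ‖z‖) {z : E} (hz : z ∈ s) :
    ‖p‖ ^ 2 ≤ ⟪p, z⟫ := by
  by_contra hc
  push_neg at hc
  have hc' : ⟪p, z - p⟫ < 0 := by
    rw [inner_sub_right, real_inner_self_eq_norm_sq] at *
    linarith
  have hzp : z - p ≠ 0 := by
    intro h
    rw [h, inner_zero_right] at hc'
    exact lt_irrefl _ hc'
  have hBpos : (0:ℝ) < ‖z - p‖ ^ 2 := pow_pos (norm_pos_iff.2 hzp) 2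
  set c : ℝ := ⟪p, z - p⟫ with hcdef
  set B : ℝ := ‖z - p‖ ^ 2 with hB
  set t : ℝ := min 1 (-c / B) with ht
  have ht0 : 0 < t := lt_min one_pos (div_pos (by linarith) hBpos)
  have ht1 : t ≤ 1 := min_le_left _ _
  have htc : t * B ≤ -c := by
    calc t * B ≤ (-c / B) * B := by
          apply mul_le_mul_of_nonneg_right (min_le_right _ _) hBpos.le
      _ = -c := by field_simp
  have hw : p + t • (z - p) ∈ s := by
    have := hs hp hz (by linarith : (0:ℝ) ≤ 1 - t) ht0.le (by ring)
    convert this using 1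
    module
  have hn := hmin _ hw
  have hexp : ‖p + t • (z - p)‖ ^ 2 = ‖p‖ ^ 2 + 2 * t * c + t ^ 2 * B := by
    rw [norm_add_sq_real, inner_smul_right, norm_smul, Real.norm_eq_abs, abs_of_pos ht0,
      mul_pow, hcdef, hB]
    ring
  have hlt : ‖p + t • (z - p)‖ ^ 2 < ‖p‖ ^ 2 := by
    rw [hexp]
    nlinarith
  have := pow_le_pow_left₀ (norm_nonneg p) hn 2
  linarith

theorem colorful_caratheodory [FiniteDimensional ℝ E] {n r : ℕ} (hr : 0 < r)
    (hn : finrank ℝ E < n) (C : Fin n → Fin r → E)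
    (h0 : ∀ i, (0 : E) ∈ convexHull ℝ (Set.range (C i))) :
    ∃ φ : Fin n → Fin r, (0 : E) ∈ convexHull ℝ (Set.range fun i => C i (φ i)) := by
  classical
  have hnpos : 0 < n := lt_of_le_of_lt (Nat.zero_le _) hn
  have hFn : Nonempty (Fin n) := ⟨⟨0, hnpos⟩⟩
  have hFr : Nonempty (Fin r) := ⟨⟨0, hr⟩⟩
  set v : (Fin n → Fin r) → ℝ :=
    fun φ => infDist 0 (convexHull ℝ (Set.range fun i => C i (φ i))) with hv
  obtain ⟨φ, -, hφmin⟩ :=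
    Finset.exists_min_image Finset.univ v ⟨Classical.arbitrary _, Finset.mem_univ _⟩
  set S : Set E := convexHull ℝ (Set.range fun i => C i (φ i)) with hS
  have hSco : IsCompact S := (Set.finite_range _).isCompact_convexHull (𝕜 := ℝ)
  have hSne : S.Nonempty := ⟨_, subset_convexHull ℝ _ (Set.mem_range_self (⟨0, hnpos⟩ : Fin n))⟩
  obtain ⟨p, hpS, hpmin⟩ := hSco.exists_isMinOn hSne (continuous_norm.continuousOn)
  have hpmin' : ∀ z ∈ S, ‖p‖ ≤ ‖z‖ := fun z hz => hpmin hz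
  by_cases hp0 : p = 0
  · exact ⟨φ, hp0 ▸ hpS⟩
  exfalso
  -- the nearest point characterization
  have hineq : ∀ i, ‖p‖ ^ 2 ≤ ⟪p, C i (φ i)⟫ := fun i =>
    variational (convex_convexHull ℝ _) hpS hpmin'
      (subset_convexHull ℝ _ (Set.mem_range_self i))
  obtain ⟨i0, hi0⟩ := drop_index hn (fun i => C i (φ i)) hpS hp0 hineq
  -- pick a swap target
  obtain ⟨j', hj'⟩ : ∃ j' : Fin r, ⟪p, C i0 j'⟫ ≤ 0 := by
    by_contra h
    push_neg at h
    have hsub : Set.range (C i0) ⊆ {z : E | 0 < ⟪p, z⟫} := by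
      rintro _ ⟨j, rfl⟩
      exact h j
    have hconv : Convex ℝ {z : E | 0 < ⟪p, z⟫} :=
      convex_halfSpace_gt ⟨fun a b => inner_add_right p a b,
        fun c a => real_inner_smul_right p a c⟩ 0
    have := convexHull_min hsub hconv (h0 i0)
    simp at this
  set φ' : Fin n → Fin r := Function.update φ i0 j' with hφ'
  set S' : Set E := convexHull ℝ (Set.range fun i => C i (φ' i)) with hS'
  have hpS' : p ∈ S' := by
    refine convexHull_mono ?_ hi0
    rintro _ ⟨i, hi, rfl⟩
    exact ⟨i, by simp only [hφ', Function.update_of_ne hi]⟩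
  set q : E := C i0 j' with hq
  have hqS' : q ∈ S' := by
    apply subset_convexHull ℝ _
    exact ⟨i0, by simp only [hφ', Function.update_self, hq]⟩
  set A : ℝ := ‖p‖ ^ 2 with hA
  set B : ℝ := ‖q‖ ^ 2 with hB
  have hApos : 0 < A := pow_pos (norm_pos_iff.2 hp0) 2
  have hBnn : 0 ≤ B := sq_nonneg _
  set t : ℝ := A / (A + B) with ht
  have hABpos : 0 < A + B := by linarith
  have ht0 : 0 ≤ t := by positivity
  have ht1 : t ≤ 1 := by
    rw [ht, div_le_one hABpos]; linarith
  have hwS' : (1 - t) • p + t • q ∈ S' :=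
    (convex_convexHull ℝ _) hpS' hqS' (by linarith) ht0 (by ring)
  have hnorm : ‖(1 - t) • p + t • q‖ ^ 2 < A := by
    have hexp : ‖(1 - t) • p + t • q‖ ^ 2
        = (1 - t) ^ 2 * A + 2 * ((1 - t) * t) * ⟪p, q⟫ + t ^ 2 * B := by
      rw [norm_add_sq_real, real_inner_smul_left, real_inner_smul_right, norm_smul, norm_smul,
        mul_pow, mul_pow, Real.norm_eq_abs, Real.norm_eq_abs, sq_abs, sq_abs, hA, hB]
      ring
    rw [hexp]
    have hcross : 2 * ((1 - t) * t) * ⟪p, q⟫ ≤ 0 := by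
      apply mul_nonpos_of_nonneg_of_nonpos _ hj'
      nlinarith
    have hval : (1 - t) ^ 2 * A + t ^ 2 * B < A := by
      have key : (1 - t) ^ 2 * A + t ^ 2 * B = A * B / (A + B) := by
        rw [ht]
        field_simp
        ring
      rw [key, div_lt_iff₀ hABpos]
      nlinarith
    linarith
  have hchain : v φ ≤ v φ' := hφmin φ' (Finset.mem_univ _)
  have hle1 : ‖p‖ ≤ v φ := by
    by_contra h
    push_neg at h
    obtain ⟨z, hz, hdz⟩ := (infDist_lt_iff hSne).1 h
    rw [dist_zero_left] at hdz
    exact absurd (hpmin' z hz) (not_le.2 hdz)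
  have hle2 : v φ' ≤ ‖(1 - t) • p + t • q‖ := by
    have := infDist_le_dist_of_mem (x := (0 : E)) hwS'
    rwa [dist_zero_left] at this
  have : ‖(1 - t) • p + t • q‖ < ‖p‖ := by
    have h2 := hnorm
    nlinarith [norm_nonneg ((1 - t) • p + t • q), norm_nonneg p]
  linarith

theorem tverberg_points (l r : ℕ) (hr : 1 ≤ r)
    (x : Fin ((r - 1) * (l + 1) + 1) → (Fin l → ℝ)) :
    ∃ φ : Fin ((r - 1) * (l + 1) + 1) → Fin r, ∃ p : Fin l → ℝ,
      ∀ j : Fin r, p ∈ convexHull ℝ (x '' {i | φ i = j}) := by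
  classical
  set T : EuclideanSpace ℝ (Fin (r - 1) × Fin (l + 1)) ≃ₗ[ℝ] ((Fin (r - 1) × Fin (l + 1)) → ℝ) :=
    WithLp.linearEquiv 2 ℝ _ with hT
  have hfin : finrank ℝ (EuclideanSpace ℝ (Fin (r - 1) × Fin (l + 1))) < (r - 1) * (l + 1) + 1 := by
    rw [finrank_euclideanSpace, Fintype.card_prod, Fintype.card_fin, Fintype.card_fin]
    omega
  set a : Fin ((r - 1) * (l + 1) + 1) → Fin (l + 1) → ℝ := fun i => Fin.snoc (x i) 1 with ha
  set v : Fin r → Fin (r - 1) → ℝ := fun j s =>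
    (if (s : ℕ) = (j : ℕ) then 1 else 0) - (if (j : ℕ) = r - 1 then 1 else 0) with hv
  have hvsum : ∀ s : Fin (r - 1), ∑ j : Fin r, v j s = 0 := by
    intro s
    have h1 : ∀ j : Fin r, (((s : ℕ) = (j : ℕ))) = (j = ⟨(s : ℕ), by omega⟩) := by
      intro j
      simp [Fin.ext_iff, eq_comm]
    have h2 : ∀ j : Fin r, (((j : ℕ) = r - 1)) = (j = ⟨r - 1, by omega⟩) := by
      intro j
      simp [Fin.ext_iff]
    simp only [hv, h1, h2, Finset.sum_sub_distrib, Finset.sum_ite_eq', Finset.mem_univ, if_true]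
    ring
  have hvkey : ∀ c : Fin r → ℝ, (∀ s : Fin (r - 1), ∑ j, c j * v j s = 0) →
      ∀ j j' : Fin r, c j = c j' := by
    intro c hc
    suffices h : ∀ j : Fin r, c j = c ⟨r - 1, by omega⟩ by
      intro j j'; rw [h j, h j']
    intro j
    by_cases hj : (j : ℕ) = r - 1
    · congr 1
      exact Fin.ext hj
    · have hjlt : (j : ℕ) < r - 1 := by omega
      have hcs := hc ⟨(j : ℕ), hjlt⟩
      have h1 : ∀ j' : Fin r, ((((⟨(j : ℕ), hjlt⟩ : Fin (r - 1)) : ℕ) = (j' : ℕ))) = (j' = j) := by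
        intro j'
        simp [Fin.ext_iff, eq_comm]
      have h2 : ∀ j' : Fin r, (((j' : ℕ) = r - 1)) = (j' = ⟨r - 1, by omega⟩) := by
        intro j'
        simp [Fin.ext_iff]
      rw [show (0:ℝ) = c j - c ⟨r - 1, by omega⟩ - (c j - c ⟨r - 1, by omega⟩) by ring] at hcs
      have : ∑ j' : Fin r, c j' * v j' ⟨(j : ℕ), hjlt⟩ = c j - c ⟨r - 1, by omega⟩ := by
        simp only [hv, h1, h2, mul_sub, Finset.sum_sub_distrib, mul_ite, mul_one, mul_zero,
          Finset.sum_ite_eq', Finset.mem_univ, if_true]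
      rw [this] at hcs
      linarith
  set C : Fin ((r - 1) * (l + 1) + 1) → Fin r → EuclideanSpace ℝ (Fin (r - 1) × Fin (l + 1)) :=
    fun i j => T.symm (fun sk => v j sk.1 * a i sk.2) with hC
  have hsumC : ∀ i, ∑ j, C i j = (0 : EuclideanSpace ℝ (Fin (r - 1) × Fin (l + 1))) := by
    intro i
    apply T.injective
    rw [map_sum, map_zero]
    funext sk
    rw [Finset.sum_apply]
    simp only [hC, LinearEquiv.apply_symm_apply]
    rw [← Finset.sum_mul, hvsum sk.1, zero_mul]
    rfl
  have h0 : ∀ i, (0 : EuclideanSpace ℝ (Fin (r - 1) × Fin (l + 1))) ∈ convexHull ℝ (Set.range (C i)) := by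
    intro i
    apply mem_convexHull_of_exists_fintype (fun _ : Fin r => (r : ℝ)⁻¹) (C i)
    · intro j; positivity
    · rw [Finset.sum_const, Finset.card_univ, Fintype.card_fin, nsmul_eq_mul]
      field_simp
    · exact fun j => Set.mem_range_self j
    · rw [← Finset.smul_sum, hsumC, smul_zero]
  obtain ⟨φ, hφ⟩ := colorful_caratheodory (by omega : 0 < r) hfin C h0
  have : Nonempty (Fin ((r - 1) * (l + 1) + 1)) := ⟨⟨0, by omega⟩⟩
  obtain ⟨μ, hμ0, hμ1, hμsum⟩ := exists_weights hφ
  -- coordinates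
  have hcoord : ∀ sk : Fin (r - 1) × Fin (l + 1),
      ∑ i, μ i * (v (φ i) sk.1 * a i sk.2) = 0 := by
    intro sk
    have h := congrArg T hμsum
    rw [map_sum, map_zero] at h
    have h2 := congrFun h sk
    rw [Finset.sum_apply] at h2
    simpa only [map_smul, hC, LinearEquiv.apply_symm_apply, Pi.smul_apply, smul_eq_mul,
      Pi.zero_apply] using h2
  set cc : Fin (l + 1) → Fin r → ℝ :=
    fun k j => ∑ i ∈ Finset.univ.filter (fun i => φ i = j), μ i * a i k with hcc
  have hccsum : ∀ k s, ∑ j, cc k j * v j s = 0 := by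
    intro k s
    rw [← hcoord (s, k), eq_comm,
      ← Finset.sum_fiberwise_of_maps_to (fun i _ => Finset.mem_univ (φ i))
        (fun i => μ i * (v (φ i) s * a i k))]
    apply Finset.sum_congr rfl
    intro j _
    rw [hcc, Finset.sum_mul]
    apply Finset.sum_congr rfl
    intro i hi
    rw [(Finset.mem_filter.1 hi).2]
    ring
  have hccconst : ∀ k (j j' : Fin r), cc k j = cc k j' := fun k => hvkey (cc k) (hccsum k)
  set jm : Fin r := ⟨r - 1, by omega⟩ with hjm
  have halast : ∀ i, a i (Fin.last l) = 1 := fun i => by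
    rw [ha]; exact Fin.snoc_last _ _
  have htj : ∀ j, cc (Fin.last l) j = ∑ i ∈ Finset.univ.filter (fun i => φ i = j), μ i := by
    intro j
    rw [hcc]
    apply Finset.sum_congr rfl
    intro i _
    rw [halast i, mul_one]
  have hsum1 : ∑ j, cc (Fin.last l) j = 1 := by
    rw [show ∑ j, cc (Fin.last l) j
        = ∑ j, ∑ i ∈ Finset.univ.filter (fun i => φ i = j), μ i from
      Finset.sum_congr rfl fun j _ => htj j]
    rw [Finset.sum_fiberwise_of_maps_to (fun i _ => Finset.mem_univ (φ i)) μ]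
    exact hμ1
  have hccr : ∀ j, cc (Fin.last l) j = (r : ℝ)⁻¹ := by
    intro j
    have : ∑ j', cc (Fin.last l) j' = (r : ℝ) * cc (Fin.last l) j := by
      rw [show ∑ j', cc (Fin.last l) j' = ∑ _j' : Fin r, cc (Fin.last l) j from
        Finset.sum_congr rfl fun j' _ => hccconst _ j' j]
      rw [Finset.sum_const, Finset.card_univ, Fintype.card_fin, nsmul_eq_mul]
    rw [hsum1] at this
    have hrne : (r : ℝ) ≠ 0 := by positivity
    field_simp
    linarith
  set p : Fin l → ℝ := fun k => (r : ℝ) * cc (Fin.castSucc k) jm with hp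
  refine ⟨φ, p, fun j => ?_⟩
  have hws : (0 : ℝ) < ∑ i ∈ Finset.univ.filter (fun i => φ i = j), μ i := by
    rw [← htj j, hccr j]
    positivity
  have hmem := Finset.centerMass_mem_convexHull (Finset.univ.filter (fun i => φ i = j))
    (fun i _ => hμ0 i) hws (z := x) (s := x '' {i | φ i = j})
    (fun i hi => Set.mem_image_of_mem x (Finset.mem_filter.1 hi).2)
  have hcm : (Finset.univ.filter (fun i => φ i = j)).centerMass μ x = p := by
    rw [Finset.centerMass]
    funext k
    rw [Pi.smul_apply, Finset.sum_apply, smul_eq_mul]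
    have hxa : ∀ i, x i k = a i (Fin.castSucc k) := by
      intro i
      simp [ha]
    have : ∑ i ∈ Finset.univ.filter (fun i => φ i = j), (μ i • x i) k
        = cc (Fin.castSucc k) j := by
      rw [hcc]
      apply Finset.sum_congr rfl
      intro i _
      rw [Pi.smul_apply, smul_eq_mul, hxa i]
    rw [this]  -- needs the sum inside; adjust
    rw [← htj j, hccr j, hp, hccconst (Fin.castSucc k) j jm]
    field_simp
  rw [hcm] at hmem
  exact hmem

open Pointwise

/-- Tverberg theorem via a parametrization `D : ℝ^l → 𝓒` satisfying
`D(conv F) ⊆ conv(⋃ D(F))` for finite `F`, with `f ∘ D` min-concave: any family of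
`(r-1)(l+1)+1` members of `𝓒` with `f ≥ 1` admits a partition into `r` parts whose
convex hulls all contain a common `K ∈ 𝓒` with `f(K) ≥ 1`. -/
theorem tverberg_minkowski_parametrization (d l r : ℕ) (hr : 1 ≤ r)
    (𝓒 : Set (Set (Fin d → ℝ))) (h𝓒 : ∀ C ∈ 𝓒, Convex ℝ C)
    (D : (Fin l → ℝ) → Set (Fin d → ℝ)) (hD : Set.range D = 𝓒)
    (hDconv : ∀ F : Finset (Fin l → ℝ), ∀ x ∈ convexHull ℝ (F : Set (Fin l → ℝ)),
      D x ⊆ convexHull ℝ (⋃ a ∈ F, D a))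
    (f : Set (Fin d → ℝ) → ℝ)
    (hf : ∀ x y : Fin l → ℝ, ∀ lam ∈ Set.Icc (0 : ℝ) 1,
      min (f (D x)) (f (D y)) ≤ f (D (lam • x + (1 - lam) • y)))
    (F : Fin ((r - 1) * (l + 1) + 1) → Set (Fin d → ℝ))
    (hFmem : ∀ i, F i ∈ 𝓒) (hFf : ∀ i, 1 ≤ f (F i)) :
    ∃ P : Fin ((r - 1) * (l + 1) + 1) → Fin r, ∃ K ∈ 𝓒, 1 ≤ f K ∧
      ∀ j : Fin r, K ⊆ convexHull ℝ (⋃ i ∈ {i | P i = j}, F i) := by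
  classical
  have hx : ∀ i, ∃ z : Fin l → ℝ, D z = F i := by
    intro i
    have h := hFmem i
    rw [← hD] at h
    exact h
  choose x hxD using hx
  obtain ⟨φ, p, hp⟩ := tverberg_points l r hr x
  set S : Set (Fin l → ℝ) := {z | 1 ≤ f (D z)} with hS
  have hSconv : Convex ℝ S := by
    intro z hz w hw α β hα hβ hαβ
    have hmc := hf z w α ⟨hα, by linarith⟩
    have hβval : 1 - α = β := by linarith
    rw [hβval] at hmc
    exact le_trans (le_min hz hw) hmc
  have hxS : ∀ i, x i ∈ S := fun i => by
    rw [hS, Set.mem_setOf_eq, hxD i]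
    exact hFf i
  have hpS : p ∈ S := by
    have hsub : x '' {i | φ i = ⟨0, hr⟩} ⊆ S := by
      rintro _ ⟨i, -, rfl⟩
      exact hxS i
    exact convexHull_min hsub hSconv (hp ⟨0, hr⟩)
  refine ⟨φ, D p, ?_, hpS, fun j => ?_⟩
  · rw [← hD]
    exact Set.mem_range_self p
  · set G : Finset (Fin l → ℝ) := (Finset.univ.filter (fun i => φ i = j)).image x with hG
    have hpG : p ∈ convexHull ℝ (G : Set (Fin l → ℝ)) := by
      have hGeq : (G : Set (Fin l → ℝ)) = x '' {i | φ i = j} := by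
        rw [hG]
        ext z
        simp [Finset.coe_image, Finset.coe_filter]
      rw [hGeq]
      exact hp j
    refine (hDconv G p hpG).trans (convexHull_mono ?_)
    intro z hz
    rw [Set.mem_iUnion₂] at hz ⊢
    obtain ⟨a, haG, hza⟩ := hz
    obtain ⟨i, hi, rfl⟩ := Finset.mem_image.1 haG
    exact ⟨i, (Finset.mem_filter.1 hi).2, by rwa [hxD i] at hza⟩
end

section
/- Tverberg for increasing segments: Given a family of 2(r-1)d + 1 segments in ℝ^d, each increasing (endpoints comparable in the coordinatewise order) and each of ℓ¹-length exactly one, there exists a partition of the family into r parts 𝓐_1, …, 𝓐_r such that ∩_{j=1}^r conv(∪𝓐_j) contains an increasing segment of ℓ¹-length one. -/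
open Pointwise

/-- An increasing segment of `ℓ¹`-length one in `ℝ^d`: a segment whose endpoints are
comparable in the coordinatewise order and whose coordinate increments sum to one. -/
def IsIncrUnitSegment {d : ℕ} (S : Set (Fin d → ℝ)) : Prop :=
  ∃ x y : Fin d → ℝ, (∀ i, y i ≤ x i) ∧ (∑ i, (x i - y i)) = 1 ∧ S = segment ℝ y x

section TverbergAux


open Finset Metric

variable {E : Type*} [NormedAddCommGroup E] [InnerProductSpace ℝ E]

local notation "⟪" x ", " y "⟫" => @inner ℝ _ _ x y

lemma exists_smaller_on_segment {v y : E} (hc : ⟪v, y - v⟫ < 0) :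
    ∃ s : ℝ, 0 ≤ s ∧ s ≤ 1 ∧ ‖(1 - s) • v + s • y‖ < ‖v‖ := by
  set c : ℝ := ⟪v, y - v⟫ with hcdef
  have hyv : y - v ≠ 0 := by
    intro h; rw [hcdef, h, inner_zero_right] at hc; exact lt_irrefl 0 hc
  set D : ℝ := ‖y - v‖ ^ 2 with hD
  have hDpos : 0 < D := by
    have : ‖y - v‖ ≠ 0 := norm_ne_zero_iff.2 hyv
    positivity
  set s : ℝ := min 1 (-c / D) with hs
  have hspos : 0 < s := lt_min one_pos (div_pos (by linarith) hDpos)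
  have hs1 : s ≤ 1 := min_le_left _ _
  have hsD : s * D ≤ -c := by
    have := min_le_right 1 (-c / D)
    calc s * D ≤ (-c / D) * D := by nlinarith
    _ = -c := by field_simp
  refine ⟨s, hspos.le, hs1, ?_⟩
  have hrw : (1 - s) • v + s • y = v + s • (y - v) := by
    rw [smul_sub, sub_smul, one_smul]; abel
  have hnorm : ‖v + s • (y - v)‖ ^ 2 = ‖v‖ ^ 2 + 2 * (s * c) + s ^ 2 * D := by
    rw [norm_add_sq_real, real_inner_smul_right, norm_smul, Real.norm_eq_abs,
      abs_of_nonneg hspos.le, mul_pow, hD, ← hcdef]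
  have hlt : ‖v + s • (y - v)‖ ^ 2 < ‖v‖ ^ 2 := by nlinarith
  rw [hrw]
  by_contra h
  push_neg at h
  have := pow_le_pow_left₀ (norm_nonneg v) h 2
  linarith

lemma min_norm_inner {K : Set E} (hK : Convex ℝ K) {v : E} (hv : v ∈ K)
    (hmin : ∀ w ∈ K, ‖v‖ ≤ ‖w‖) {w : E} (hw : w ∈ K) : ‖v‖ ^ 2 ≤ ⟪v, w⟫ := by
  by_contra h
  push_neg at h
  have hc : ⟪v, w - v⟫ < 0 := by
    rw [inner_sub_right, real_inner_self_eq_norm_sq]; linarith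
  obtain ⟨s, hs0, hs1, hlt⟩ := exists_smaller_on_segment hc
  exact absurd (hmin _ (hK hv hw (by linarith) hs0 (by ring))) (not_le.2 hlt)

open Module in
lemma card_le_of_affineIndependent_hyperplane [FiniteDimensional ℝ E] {m : ℕ}
    (hm : finrank ℝ E = m) {v : E} (hv : v ≠ 0) {c : ℝ} (B : Finset E)
    (hB : AffineIndependent ℝ ((↑) : B → E)) (hBH : ∀ y ∈ B, ⟪v, y⟫ = c) :
    B.card ≤ m := by
  set f : E →ₗ[ℝ] ℝ := innerₗ E v with hf
  have hvv : ⟪v, v⟫ ≠ 0 := inner_self_ne_zero.2 hv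
  have hrange : LinearMap.range f = ⊤ := by
    rw [LinearMap.range_eq_top]
    intro a
    exact ⟨(a / ⟪v, v⟫) • v, by simp [hf, real_inner_smul_right]; field_simp⟩
  have hker : finrank ℝ (LinearMap.ker f) + 1 = m := by
    have h1 := LinearMap.finrank_range_add_finrank_ker f
    rw [hrange, finrank_top, finrank_self, hm] at h1
    omega
  have hspan : vectorSpan ℝ (Set.range ((↑) : B → E)) ≤ LinearMap.ker f := by
    rw [Subtype.range_coe, vectorSpan_def]
    apply Submodule.span_le.2
    rintro x hx
    rw [Set.mem_vsub] at hx
    obtain ⟨a, ha, b, hb, rfl⟩ := hx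
    simp only [SetLike.mem_coe, LinearMap.mem_ker, vsub_eq_sub, hf, map_sub]
    simp only [innerₗ_apply_apply]
    rw [hBH a ha, hBH b hb, sub_self]
  have hcard := hB.card_le_finrank_succ
  rw [Fintype.card_coe] at hcard
  calc B.card ≤ finrank ℝ (vectorSpan ℝ (Set.range ((↑) : B → E))) + 1 := hcard
    _ ≤ finrank ℝ (LinearMap.ker f) + 1 := by
        exact Nat.add_le_add_right (Submodule.finrank_mono hspan) 1
    _ = m := hker

open Module in
theorem colorful_caratheodory_s18 [FiniteDimensional ℝ E] {m : ℕ} (hm : finrank ℝ E = m)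
    (C : Fin (m + 1) → Finset E) (hC : ∀ k, (0 : E) ∈ convexHull ℝ (C k : Set E)) :
    ∃ σ : Fin (m + 1) → E, (∀ k, σ k ∈ C k) ∧ (0 : E) ∈ convexHull ℝ (Set.range σ) := by
  classical
  have hCne : ∀ k, (C k).Nonempty := by
    intro k
    rcases (C k).eq_empty_or_nonempty with h | h
    · exfalso; have := hC k; rw [h] at this; simpa using this
    · exact h
  haveI : Nonempty (∀ k : Fin (m + 1), {x // x ∈ C k}) :=
    ⟨fun k => ⟨(hCne k).choose, (hCne k).choose_spec⟩⟩
  -- minimize distance from 0 to the convex hull of the transversal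
  obtain ⟨t, ht⟩ := Finite.exists_min
    (fun t : ∀ k : Fin (m + 1), {x // x ∈ C k} =>
      infDist 0 (convexHull ℝ (Set.range fun k => (t k : E))))
  set σ : Fin (m + 1) → E := fun k => (t k : E) with hσ
  set K : Set E := convexHull ℝ (Set.range σ) with hK
  have hKcvx : Convex ℝ K := convex_convexHull ℝ _
  have hKcpt : IsCompact K := (Set.finite_range σ).isCompact_convexHull ℝ
  have hKne : K.Nonempty := ⟨σ 0, subset_convexHull ℝ _ ⟨0, rfl⟩⟩
  obtain ⟨v, hvK, hvd⟩ := hKcpt.exists_infDist_eq_dist hKne 0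
  by_cases hv0 : v = 0
  · exact ⟨σ, fun k => (t k).2, by rw [← hv0]; exact hvK⟩
  exfalso
  have hvnorm : infDist 0 K = ‖v‖ := by rw [hvd, dist_zero_left]
  have hmin : ∀ w ∈ K, ‖v‖ ≤ ‖w‖ := by
    intro w hw
    rw [← hvnorm, ← dist_zero_left]
    exact infDist_le_dist_of_mem hw
  have hinner : ∀ w ∈ K, ‖v‖ ^ 2 ≤ ⟪v, w⟫ := fun w hw => min_norm_inner hKcvx hvK hmin hw
  -- extract weights on the image finset
  set s : Finset E := Finset.image σ Finset.univ with hs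
  have hsK : v ∈ convexHull ℝ (s : Set E) := by
    rw [hs]; rw [hK] at hvK; convert hvK using 2
    simp [Finset.coe_image]
  rw [Finset.convexHull_eq] at hsK
  obtain ⟨w, hw0, hw1, hwc⟩ := hsK
  have hcm : ∑ y ∈ s, w y • y = v := by
    rw [Finset.centerMass, hw1] at hwc; simpa using hwc
  -- points with positive weight lie on the hyperplane
  have hsub : (s : Set E) ⊆ K := by
    intro y hy
    rw [hK]
    apply subset_convexHull ℝ (Set.range σ)
    rw [hs] at hy
    simp only [Finset.coe_image, Finset.coe_univ, Set.image_univ] at hy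
    exact hy
  have hzero : ∑ y ∈ s, w y * (⟪v, y⟫ - ‖v‖ ^ 2) = 0 := by
    have : ⟪v, v⟫ = ∑ y ∈ s, w y * ⟪v, y⟫ := by
      rw [← hcm, inner_sum]
      exact Finset.sum_congr rfl fun y _ => real_inner_smul_right _ _ _
    have h2 : ⟪v, v⟫ = ‖v‖ ^ 2 := real_inner_self_eq_norm_sq v
    calc ∑ y ∈ s, w y * (⟪v, y⟫ - ‖v‖ ^ 2)
        = (∑ y ∈ s, w y * ⟪v, y⟫) - (∑ y ∈ s, w y) * ‖v‖ ^ 2 := by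
          rw [Finset.sum_mul, ← Finset.sum_sub_distrib]; exact Finset.sum_congr rfl fun y _ => by ring
      _ = 0 := by rw [← this, hw1, h2]; ring
  have hhyp : ∀ y ∈ s, 0 < w y → ⟪v, y⟫ = ‖v‖ ^ 2 := by
    intro y hy hwy
    have hterm : ∀ z ∈ s, 0 ≤ w z * (⟪v, z⟫ - ‖v‖ ^ 2) := fun z hz =>
      mul_nonneg (hw0 z hz) (sub_nonneg.2 (hinner z (hsub hz)))
    have := (Finset.sum_eq_zero_iff_of_nonneg hterm).1 hzero y hy
    have := mul_eq_zero.1 this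
    rcases this with h | h
    · exact absurd h (ne_of_gt hwy)
    · linarith [sub_eq_zero.1 h]
  -- v is in the hull of positive-weight points
  set s' : Finset E := s.filter (fun y => 0 < w y) with hs'
  have hws' : ∀ y ∈ s, y ∉ s' → w y = 0 := by
    intro y hy hy'
    rw [hs', Finset.mem_filter] at hy'
    push_neg at hy'
    exact le_antisymm (hy' hy) (hw0 y hy)
  have hsum' : ∑ y ∈ s', w y = 1 := by
    rw [← hw1]
    exact (Finset.sum_subset (Finset.filter_subset _ _)
      (fun y hy hy' => hws' y hy hy')).symm ▸ rfl
  have hcm' : ∑ y ∈ s', w y • y = v := by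
    rw [← hcm]
    exact Finset.sum_subset (Finset.filter_subset _ _)
      (fun y hy hy' => by rw [hws' y hy hy', zero_smul])
  have hvs' : v ∈ convexHull ℝ (s' : Set E) := by
    have := s'.centerMass_mem_convexHull (w := w)
      (fun y hy => hw0 y (Finset.filter_subset _ _ hy)) (by rw [hsum']; norm_num)
      (fun y hy => Finset.mem_coe.2 hy)
    rwa [Finset.centerMass, hsum', inv_one, one_smul, hcm'] at this
  -- Caratheodory
  rw [convexHull_eq_union] at hvs'
  simp only [Set.mem_iUnion] at hvs'
  obtain ⟨B, hBs', hBai, hvB⟩ := hvs'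
  have hBcard : B.card ≤ m := by
    refine card_le_of_affineIndependent_hyperplane hm hv0 B hBai (c := ‖v‖ ^ 2) ?_
    intro y hy
    have hys' := hBs' hy
    rw [Finset.mem_coe, hs', Finset.mem_filter] at hys'
    exact hhyp y hys'.1 hys'.2
  -- find a free color
  have hBσ : ∀ y ∈ B, ∃ k, σ k = y := by
    intro y hy
    have := hBs' hy
    rw [Finset.mem_coe, hs', Finset.mem_filter, hs, Finset.mem_image] at this
    obtain ⟨⟨k, _, hk⟩, _⟩ := this
    exact ⟨k, hk⟩
  set g : {y // y ∈ B} → Fin (m + 1) := fun y => (hBσ y.1 y.2).choose with hg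
  have hgspec : ∀ y : {y // y ∈ B}, σ (g y) = y.1 := fun y => (hBσ y.1 y.2).choose_spec
  have hgcard : (Finset.image g Finset.univ).card < m + 1 := by
    calc (Finset.image g Finset.univ).card ≤ Finset.univ.card :=
          Finset.card_image_le
      _ = B.card := by rw [Finset.card_univ, Fintype.card_coe]
      _ ≤ m := hBcard
      _ < m + 1 := Nat.lt_succ_self m
  obtain ⟨k₀, hk₀⟩ : ∃ k₀, k₀ ∉ Finset.image g Finset.univ := by
    by_contra h
    push_neg at h
    have h2 : (Finset.univ : Finset (Fin (m + 1))).card ≤ (Finset.image g Finset.univ).card :=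
      Finset.card_le_card (fun k _ => h k)
    rw [Finset.card_univ, Fintype.card_fin] at h2
    omega
  have hBsub : (B : Set E) ⊆ σ '' {k | k ≠ k₀} := by
    intro y hy
    refine ⟨g ⟨y, hy⟩, ?_, hgspec ⟨y, hy⟩⟩
    intro h
    exact hk₀ (h ▸ Finset.mem_image_of_mem g (Finset.mem_univ _))
  have hvB' : v ∈ convexHull ℝ (σ '' {k | k ≠ k₀}) :=
    convexHull_mono hBsub hvB
  -- find a point of color k₀ with nonpositive inner product
  obtain ⟨y₀, hy₀C, hy₀⟩ : ∃ y₀ ∈ C k₀, ⟪v, y₀⟫ ≤ 0 := by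
    by_contra h
    push_neg at h
    have hhalf : Convex ℝ {z : E | (0 : ℝ) < ⟪v, z⟫} :=
      convex_halfSpace_gt ⟨fun a b => inner_add_right _ _ _,
        fun c x => real_inner_smul_right _ _ _⟩ 0
    have : (C k₀ : Set E) ⊆ {z : E | (0 : ℝ) < ⟪v, z⟫} := fun z hz => h z hz
    have h0 := convexHull_min this hhalf (hC k₀)
    simp at h0
  -- exchange
  set t' : ∀ k : Fin (m + 1), {x // x ∈ C k} :=
    Function.update t k₀ ⟨y₀, hy₀C⟩ with ht'
  set σ' : Fin (m + 1) → E := fun k => (t' k : E) with hσ'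
  set K' : Set E := convexHull ℝ (Set.range σ') with hK'
  have hσeq : ∀ k, k ≠ k₀ → σ' k = σ k := by
    intro k hk
    simp [hσ', ht', Function.update_of_ne hk, hσ]
  have hvK' : v ∈ K' := by
    have himg : σ '' {k | k ≠ k₀} = σ' '' {k | k ≠ k₀} :=
      (Set.image_congr fun k hk => (hσeq k hk).symm)
    rw [hK']
    refine convexHull_mono ?_ (himg ▸ hvB')
    exact Set.image_subset_range σ' _
  have hy₀K' : y₀ ∈ K' := by
    have : σ' k₀ = y₀ := by simp [hσ', ht']
    exact subset_convexHull ℝ _ ⟨k₀, this⟩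
  have hcneg : ⟪v, y₀ - v⟫ < 0 := by
    rw [inner_sub_right, real_inner_self_eq_norm_sq]
    have : (0:ℝ) < ‖v‖ ^ 2 := pow_pos (norm_pos_iff.2 hv0) 2
    linarith
  obtain ⟨sc, hsc0, hsc1, hlt⟩ := exists_smaller_on_segment hcneg
  have hzK' : (1 - sc) • v + sc • y₀ ∈ K' :=
    (convex_convexHull ℝ _) hvK' hy₀K' (by linarith) hsc0 (by ring)
  have hd' : infDist 0 K' ≤ ‖(1 - sc) • v + sc • y₀‖ := by
    rw [← dist_zero_left]
    exact infDist_le_dist_of_mem hzK'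
  have hfinal : infDist 0 K ≤ infDist 0 K' := ht t'
  rw [hvnorm] at hfinal
  linarith

/-! ### Sarkaria's trick -/

private noncomputable def qvec (r : ℕ) : Fin r → Fin (r - 1) → ℝ :=
  fun s t => (if (s : ℕ) = (t : ℕ) then 1 else 0) - 1 / r

lemma qvec_ite {r : ℕ} (s s₀ : Fin r) :
    (if (s : ℕ) = (s₀ : ℕ) then (1:ℝ) else 0) = if s = s₀ then 1 else 0 :=
  if_congr (by simp [Fin.ext_iff]) rfl rfl

lemma qvec_sum {r : ℕ} (hr : 1 ≤ r) (t : Fin (r - 1)) :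
    ∑ s : Fin r, qvec r s t = 0 := by
  have htr : (t : ℕ) < r := lt_of_lt_of_le t.2 (Nat.sub_le r 1)
  have h1 : ∑ s : Fin r, (if (s : ℕ) = (t : ℕ) then (1 : ℝ) else 0) = 1 := by
    rw [Finset.sum_congr rfl (fun s _ => qvec_ite s ⟨(t : ℕ), htr⟩)]
    simp
  have hrne : ((r : ℝ)) ≠ 0 := by positivity
  simp only [qvec, Finset.sum_sub_distrib, h1, Finset.sum_const, Finset.card_univ,
    Fintype.card_fin, nsmul_eq_mul]
  field_simp
  norm_num

lemma qvec_key {r : ℕ} (hr : 1 ≤ r) (α : Fin r → ℝ)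
    (h : ∀ t : Fin (r - 1), ∑ s : Fin r, α s * qvec r s t = 0) :
    ∀ s : Fin r, α s = (∑ s' : Fin r, α s') / r := by
  have hrne : ((r : ℝ)) ≠ 0 := by positivity
  set A : ℝ := ∑ s' : Fin r, α s' with hA
  have hsmall : ∀ s : Fin r, (s : ℕ) < r - 1 → α s = A / r := by
    intro s hs
    have ht := h ⟨(s : ℕ), hs⟩
    have hexp : ∑ s' : Fin r, α s' * qvec r s' ⟨(s : ℕ), hs⟩ = α s - A / r := by
      simp only [qvec, mul_sub]
      rw [Finset.sum_sub_distrib]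
      congr 1
      · rw [Finset.sum_congr rfl (fun s' _ => by
          rw [qvec_ite (r := r) s' s])]
        simp
      · rw [← Finset.sum_mul, mul_one_div, ← hA]
    rw [hexp] at ht
    linarith
  intro s
  rcases Nat.lt_or_ge (s : ℕ) (r - 1) with hs | hs
  · exact hsmall s hs
  · have hfib : ∀ s' : Fin r, s' ≠ s → α s' = A / r := by
      intro s' hs'
      apply hsmall
      have : (s' : ℕ) ≠ (s : ℕ) := fun hc => hs' (Fin.ext hc)
      have h1 : (s' : ℕ) < r := s'.2
      have h2 : (s : ℕ) < r := s.2
      omega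
    have hAsplit : A = α s + ∑ s' ∈ Finset.univ.erase s, α s' := by
      rw [hA, ← Finset.add_sum_erase _ _ (Finset.mem_univ s)]
    have herase : ∑ s' ∈ Finset.univ.erase s, α s' = (r - 1 : ℕ) * (A / r) := by
      rw [Finset.sum_congr rfl (fun s' hs' => hfib s' (Finset.ne_of_mem_erase hs'))]
      rw [Finset.sum_const, Finset.card_erase_of_mem (Finset.mem_univ s)]
      simp [nsmul_eq_mul]
    rw [herase] at hAsplit
    have hcast : ((r - 1 : ℕ) : ℝ) = (r : ℝ) - 1 := by
      rw [Nat.cast_sub hr]; norm_num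
    rw [hcast] at hAsplit
    field_simp at hAsplit ⊢
    linarith

lemma euc_sum_apply {ι κ : Type*} [Fintype ι] (s : Finset κ) (g : κ → EuclideanSpace ℝ ι)
    (x : ι) : (∑ k ∈ s, g k) x = ∑ k ∈ s, g k x := by
  classical
  induction s using Finset.cons_induction with
  | empty => rfl
  | cons a s ha ih => rw [Finset.sum_cons, Finset.sum_cons, PiLp.add_apply, ih]

open Module in
theorem tverberg_aux {n r : ℕ} (hr : 1 ≤ r)
    (f : Fin ((r - 1) * (n + 1) + 1) → (Fin n → ℝ)) :
    ∃ P : Fin ((r - 1) * (n + 1) + 1) → Fin r, ∃ p : Fin n → ℝ,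
      ∀ j : Fin r, p ∈ convexHull ℝ (f '' {i | P i = j}) := by
  classical
  have hrpos : (0 : ℝ) < r := by exact_mod_cast hr
  have hrne : (r : ℝ) ≠ 0 := ne_of_gt hrpos
  have hm : finrank ℝ (EuclideanSpace ℝ (Fin (r - 1) × Fin (n + 1)))
      = (r - 1) * (n + 1) := by
    rw [finrank_euclideanSpace, Fintype.card_prod, Fintype.card_fin, Fintype.card_fin]
  set vbar : Fin ((r - 1) * (n + 1) + 1) → Fin (n + 1) → ℝ :=
    fun j => Fin.snoc (f j) 1 with hvbar
  set u : Fin ((r - 1) * (n + 1) + 1) → Fin r → EuclideanSpace ℝ (Fin (r - 1) × Fin (n + 1)) :=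
    fun j s => WithLp.toLp 2 (fun p => qvec r s p.1 * vbar j p.2 : Fin (r - 1) × Fin (n + 1) → ℝ) with hu
  have husum : ∀ j, ∑ s : Fin r, u j s = 0 := by
    intro j
    apply PiLp.ext
    intro p
    rw [euc_sum_apply]
    have h1 : ∀ s : Fin r, u j s p = qvec r s p.1 * vbar j p.2 := fun s => rfl
    simp only [h1]
    rw [← Finset.sum_mul, qvec_sum hr p.1, zero_mul]
    rfl
  have hC0 : ∀ j, (0 : EuclideanSpace ℝ (Fin (r - 1) × Fin (n + 1)))
      ∈ convexHull ℝ ((Finset.image (u j) Finset.univ : Finset _) : Set _) := by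
    intro j
    have hmem := Finset.centerMass_mem_convexHull (Finset.univ : Finset (Fin r))
      (w := fun _ => (1 : ℝ)) (fun _ _ => zero_le_one)
      (by simp; omega) (z := u j)
      (fun s _ => Finset.mem_coe.2 (Finset.mem_image_of_mem _ (Finset.mem_univ s)))
    have hcm : (Finset.univ : Finset (Fin r)).centerMass (fun _ => (1 : ℝ)) (u j) = 0 := by
      rw [Finset.centerMass]
      simp only [one_smul, Finset.sum_const, Finset.card_univ, Fintype.card_fin,
        nsmul_eq_mul, mul_one]
      rw [husum j, smul_zero]
    rwa [hcm] at hmem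
  obtain ⟨σ, hσC, h0⟩ := colorful_caratheodory_s18 hm (fun j => Finset.image (u j) Finset.univ) hC0
  have hPex : ∀ j, ∃ s, u j s = σ j := by
    intro j
    obtain ⟨s, _, hs⟩ := Finset.mem_image.1 (hσC j)
    exact ⟨s, hs⟩
  choose P hP using hPex
  rw [convexHull_range_eq_exists_affineCombination] at h0
  obtain ⟨T, w, hw0, hw1, hwa⟩ := h0
  have hsum0 : ∑ j ∈ T, w j • σ j = 0 := by
    rw [affineCombination_eq_centerMass hw1, Finset.centerMass, hw1] at hwa
    simpa using hwa
  -- coordinatewise identity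
  have hcoord : ∀ (t : Fin (r - 1)) (c : Fin (n + 1)),
      ∑ j ∈ T, w j * (qvec r (P j) t * vbar j c) = 0 := by
    intro t c
    have h1 : (∑ j ∈ T, w j • σ j) (t, c) = (0 : ℝ) := by rw [hsum0]; rfl
    rw [euc_sum_apply] at h1
    have h2 : ∀ j, (w j • σ j) (t, c) = w j * (qvec r (P j) t * vbar j c) := by
      intro j
      rw [PiLp.smul_apply, ← hP j]
      rfl
    rwa [Finset.sum_congr rfl fun j _ => h2 j] at h1
  -- fiber sums
  set W : Fin (n + 1) → Fin r → ℝ :=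
    fun c s0 => ∑ j ∈ T.filter (fun j => P j = s0), w j * vbar j c with hW
  have hWtot : ∀ c : Fin (n + 1), ∑ s0 : Fin r, W c s0 = ∑ j ∈ T, w j * vbar j c :=
    fun c => Finset.sum_fiberwise_of_maps_to (fun j _ => Finset.mem_univ (P j)) _
  have hWkey : ∀ (c : Fin (n + 1)) (s0 : Fin r),
      W c s0 = (∑ j ∈ T, w j * vbar j c) / r := by
    intro c s0
    have h : ∀ t : Fin (r - 1), ∑ s1 : Fin r, W c s1 * qvec r s1 t = 0 := by
      intro t
      have h6 : ∀ s1 : Fin r, W c s1 * qvec r s1 t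
          = ∑ j ∈ T.filter (fun j => P j = s1), w j * (qvec r (P j) t * vbar j c) := by
        intro s1
        rw [hW]
        rw [Finset.sum_mul]
        refine Finset.sum_congr rfl fun j hj => ?_
        have := (Finset.mem_filter.1 hj).2
        rw [this]; ring
      rw [Finset.sum_congr rfl fun s1 _ => h6 s1]
      rw [Finset.sum_fiberwise_of_maps_to (fun j _ => Finset.mem_univ (P j))]
      exact hcoord t c
    have := qvec_key hr (W c) h s0
    rwa [hWtot c] at this
  -- weights of each fiber sum to 1/r
  have hfib1 : ∀ s0 : Fin r, ∑ j ∈ T.filter (fun j => P j = s0), w j = 1 / r := by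
    intro s0
    have h1 := hWkey (Fin.last n) s0
    simp only [hW] at h1
    have h2 : ∀ j, vbar j (Fin.last n) = 1 := fun j => Fin.snoc_last _ _
    simp only [h2, mul_one] at h1
    rwa [hw1] at h1
  -- the common point
  set p : Fin n → ℝ := fun c => ∑ j ∈ T, w j * f j c with hp
  refine ⟨P, p, ?_⟩
  intro j0
  have hmem := Finset.centerMass_mem_convexHull (T.filter (fun j => P j = j0))
    (w := w) (fun j hj => hw0 j (Finset.mem_filter.1 hj).1)
    (by rw [hfib1 j0]; positivity) (z := f)
    (fun j hj => Set.mem_image_of_mem f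
      (show j ∈ {i | P i = j0} from (Finset.mem_filter.1 hj).2))
  have hcm : (T.filter (fun j => P j = j0)).centerMass w f = p := by
    rw [Finset.centerMass, hfib1 j0]
    funext c
    rw [Pi.smul_apply, Finset.sum_apply]
    have h3 : ∀ c' : Fin n, ∀ j, w j * vbar j c'.castSucc = w j * f j c' := by
      intro c' j
      rw [hvbar]
      simp [Fin.snoc_castSucc]
    have h4 : ∑ j ∈ T.filter (fun j => P j = j0), (w j • f j) c
        = W c.castSucc j0 := by
      simp only [hW]
      refine Finset.sum_congr rfl fun j hj => ?_
      rw [Pi.smul_apply, smul_eq_mul, h3 c j]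
    rw [h4, hWkey c.castSucc j0]
    have h5 : ∑ j ∈ T, w j * vbar j c.castSucc = p c := by
      rw [hp]
      exact Finset.sum_congr rfl fun j _ => h3 c j
    rw [h5]
    simp only [smul_eq_mul]
    field_simp
  rwa [hcm] at hmem

end TverbergAux

/-- Tverberg for increasing segments: a family of `2(r-1)d + 1`
increasing segments in `ℝ^d`, each of `ℓ¹`-length one, admits a partition into `r` parts
such that the intersection of the convex hulls of the parts contains an increasing
segment of `ℓ¹`-length one. -/
theorem tverberg_increasing_segments (d r : ℕ) (hr : 1 ≤ r)
    (F : Fin (2 * (r - 1) * d + 1) → Set (Fin d → ℝ))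
    (hF : ∀ i, IsIncrUnitSegment (F i)) :
    ∃ P : Fin (2 * (r - 1) * d + 1) → Fin r, ∃ S, IsIncrUnitSegment S ∧
      ∀ j : Fin r, S ⊆ convexHull ℝ (⋃ i ∈ {i | P i = j}, F i) := by
  classical
  rcases Nat.eq_zero_or_pos d with hd0 | hd
  · subst hd0
    obtain ⟨xx, yy, _, h2, _⟩ := hF ⟨0, Nat.succ_pos _⟩
    simp at h2
  choose xx yy hxy hsum hseg using hF
  set v : Fin (2 * (r - 1) * d + 1) → Fin d → ℝ := fun i k => xx i k - yy i k with hv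
  have hv0 : ∀ i k, 0 ≤ v i k := fun i k => sub_nonneg.2 (hxy i k)
  have hvsum : ∀ i, ∑ k, v i k = 1 := hsum
  have h_idx : (r - 1) * (2 * d - 1 + 1) + 1 = 2 * (r - 1) * d + 1 := by
    have : 2 * d - 1 + 1 = 2 * d := by omega
    rw [this]; ring_nf
  set e : Fin ((r - 1) * (2 * d - 1 + 1) + 1) → Fin (2 * (r - 1) * d + 1) :=
    Fin.cast h_idx with he
  set g : Fin ((r - 1) * (2 * d - 1 + 1) + 1) → (Fin (2 * d - 1) → ℝ) :=
    fun i c => if h : (c : ℕ) < d then yy (e i) ⟨(c : ℕ), h⟩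
      else v (e i) ⟨(c : ℕ) - d, by omega⟩ with hg
  obtain ⟨P₀, p, hp⟩ := tverberg_aux (n := 2 * d - 1) hr g
  set P : Fin (2 * (r - 1) * d + 1) → Fin r :=
    fun i => P₀ (Fin.cast h_idx.symm i) with hP
  have hPe : ∀ i', P (e i') = P₀ i' := fun i' => rfl
  -- the decoded data for each part
  have key : ∀ j : Fin r, ∃ Y V : Fin d → ℝ, (∀ k, 0 ≤ V k) ∧ (∑ k, V k) = 1 ∧
      (∀ k : Fin d, Y k = p ⟨(k : ℕ), by omega⟩) ∧
      (∀ k : Fin d, ∀ _h2 : (k : ℕ) + 1 < d, V k = p ⟨d + (k : ℕ), by omega⟩) ∧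
      (∀ τ : ℝ, 0 ≤ τ → τ ≤ 1 →
        (fun k => Y k + τ * V k) ∈ convexHull ℝ (⋃ i ∈ {i | P i = j}, F i)) := by
    intro j
    have hpj := hp j
    rw [_root_.convexHull_eq] at hpj
    obtain ⟨ι, t, μ, z, hμ0, hμ1, hz, hcm⟩ := hpj
    have hz' : ∀ a : ι, ∃ i, a ∈ t → (P₀ i = j ∧ g i = z a) := by
      intro a
      by_cases ha : a ∈ t
      · obtain ⟨i, hi1, hi2⟩ := hz a ha
        exact ⟨i, fun _ => ⟨hi1, hi2⟩⟩
      · exact ⟨⟨0, Nat.succ_pos _⟩, fun ha' => absurd ha' ha⟩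
    choose κ hκ using hz'
    have hpc : ∀ c : Fin (2 * d - 1), p c = ∑ a ∈ t, μ a * z a c := by
      intro c
      rw [← hcm, Finset.centerMass, hμ1, inv_one, one_smul]
      rw [Finset.sum_apply]
      exact Finset.sum_congr rfl fun a _ => rfl
    refine ⟨fun k => ∑ a ∈ t, μ a * yy (e (κ a)) k,
      fun k => ∑ a ∈ t, μ a * v (e (κ a)) k, ?_, ?_, ?_, ?_, ?_⟩
    · exact fun k => Finset.sum_nonneg fun a ha =>
        mul_nonneg (hμ0 a ha) (hv0 _ _)
    · rw [Finset.sum_comm]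
      calc ∑ a ∈ t, ∑ k, μ a * v (e (κ a)) k
          = ∑ a ∈ t, μ a := by
            refine Finset.sum_congr rfl fun a _ => ?_
            rw [← Finset.mul_sum, hvsum, mul_one]
        _ = 1 := hμ1
    · intro k
      rw [hpc]
      refine Finset.sum_congr rfl fun a ha => ?_
      rw [← (hκ a ha).2]
      have : g (κ a) ⟨(k : ℕ), by omega⟩ = yy (e (κ a)) k := by
        rw [hg]
        simp only [dif_pos k.2]
      rw [this]
    · intro k hk
      rw [hpc]
      refine Finset.sum_congr rfl fun a ha => ?_
      rw [← (hκ a ha).2]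
      have : g (κ a) ⟨d + (k : ℕ), by omega⟩ = v (e (κ a)) k := by
        rw [hg]
        have h1 : ¬ (d + (k : ℕ) < d) := by omega
        simp only [dif_neg h1]
        congr 1
        exact Fin.ext (by simp)
      rw [this]
    · intro τ hτ0 hτ1
      have hmem := Finset.centerMass_mem_convexHull t (w := μ)
        (s := ⋃ i ∈ {i | P i = j}, F i) hμ0
        (by rw [hμ1]; norm_num)
        (z := fun a => fun k => yy (e (κ a)) k + τ * v (e (κ a)) k)
        (fun a ha => ?_)
      · have hcm2 : t.centerMass μ (fun a => fun k => yy (e (κ a)) k + τ * v (e (κ a)) k)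
            = fun k => (∑ a ∈ t, μ a * yy (e (κ a)) k) + τ * ∑ a ∈ t, μ a * v (e (κ a)) k := by
          rw [Finset.centerMass, hμ1, inv_one, one_smul]
          funext k
          rw [Finset.sum_apply, Finset.mul_sum, ← Finset.sum_add_distrib]
          refine Finset.sum_congr rfl fun a _ => ?_
          simp only [Pi.smul_apply, smul_eq_mul]
          ring
        rwa [hcm2] at hmem
      · apply Set.mem_biUnion (show e (κ a) ∈ {i | P i = j} from by
          rw [Set.mem_setOf_eq, hPe]; exact (hκ a ha).1)
        rw [hseg (e (κ a)), segment_eq_image']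
        refine ⟨τ, ⟨hτ0, hτ1⟩, ?_⟩
        funext k
        simp only [Pi.add_apply, Pi.smul_apply, Pi.sub_apply, smul_eq_mul]
        rfl
  choose Yf Vf hV0 hV1 hYp hVp hmem using key
  set j₀ : Fin r := ⟨0, hr⟩ with hj₀
  have hYeq : ∀ j, Yf j = Yf j₀ := by
    intro j; funext k; rw [hYp j k, hYp j₀ k]
  have hVeq : ∀ j, Vf j = Vf j₀ := by
    intro j
    funext k
    by_cases hk : (k : ℕ) + 1 < d
    · rw [hVp j k hk, hVp j₀ k hk]
    · have hall : ∀ k' : Fin d, k' ≠ k → Vf j k' = Vf j₀ k' := by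
        intro k' hk'
        have hne : (k' : ℕ) ≠ (k : ℕ) := fun hc => hk' (Fin.ext hc)
        have hk'2 : (k' : ℕ) + 1 < d := by
          have := k'.2; have := k.2; omega
        rw [hVp j k' hk'2, hVp j₀ k' hk'2]
      have hs1 : Vf j k + ∑ k' ∈ Finset.univ.erase k, Vf j k' = 1 := by
        rw [Finset.add_sum_erase _ _ (Finset.mem_univ k)]; exact hV1 j
      have hs2 : Vf j₀ k + ∑ k' ∈ Finset.univ.erase k, Vf j₀ k' = 1 := by
        rw [Finset.add_sum_erase _ _ (Finset.mem_univ k)]; exact hV1 j₀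
      have heq : ∑ k' ∈ Finset.univ.erase k, Vf j k'
          = ∑ k' ∈ Finset.univ.erase k, Vf j₀ k' :=
        Finset.sum_congr rfl fun k' hk' => hall k' (Finset.ne_of_mem_erase hk')
      linarith
  refine ⟨P, segment ℝ (Yf j₀) (fun k => Yf j₀ k + Vf j₀ k), ?_, ?_⟩
  · refine ⟨fun k => Yf j₀ k + Vf j₀ k, Yf j₀, fun k => le_add_of_nonneg_right (hV0 j₀ k),
      ?_, rfl⟩
    simp only [add_sub_cancel_left]
    exact hV1 j₀
  · intro j q hq
    rw [segment_eq_image'] at hq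
    obtain ⟨τ, ⟨hτ0, hτ1⟩, rfl⟩ := hq
    have := hmem j τ hτ0 hτ1
    rw [hYeq j, hVeq j] at this
    convert this using 1
    funext k
    simp only [Pi.add_apply, Pi.smul_apply, Pi.sub_apply, smul_eq_mul]
    ring
end
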